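/- arXiv:0911.5475 — 3 statements merged into one kernel-verified Lean document; each statement's English description precedes it below -/
import Mathlib

section
/- Let Σ = Σ(G) be the sofic subshift of a labelled graph G and let x, y ∈ Σ. Then (x, y) lies in the chain relation of (Σ, σ) if and only if ω(x) ≤ α(y) in the component order of the linking graph G/≈, or y = σⁿ(x) for some n > 0. -/
/-! Common definitions: labelled graphs, walks, follower sets, the linking
relation, subshifts over `ℤ → A`, chains, and attractors. -/

structure LGraph (A : Type) where
  V : Type
  E : Type
  [finV : Finite V]
  [finE : Finite E]
  s : E → V
  t : E → V
  lab : E → A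

attribute [instance] LGraph.finV LGraph.finE

namespace LGraph

variable {A : Type}

/-- `Walk G u v es` : the list of edges `es` forms a walk from `u` to `v`. -/
inductive Walk (G : LGraph A) : G.V → G.V → List G.E → Prop
  | nil (v : G.V) : Walk G v v []
  | cons {w : G.V} {es : List G.E} (e : G.E) (h : Walk G (G.t e) w es) :
      Walk G (G.s e) w (e :: es)

/-- There is an edge from `u` to `v`. -/
def EdgeRel (G : LGraph A) (u v : G.V) : Prop := ∃ e : G.E, G.s e = u ∧ G.t e = v

/-- `v` is reachable from `u` by a directed walk. -/
def Reach (G : LGraph A) : G.V → G.V → Prop := Relation.ReflTransGen G.EdgeRel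

/-- `u` and `v` lie in the same strongly connected component. -/
def SameComp (G : LGraph A) (u v : G.V) : Prop := G.Reach u v ∧ G.Reach v u

/-- The number of strongly connected components of `G`. -/
noncomputable def numComponents (G : LGraph A) : ℕ :=
  Nat.card {K : Set G.V // ∃ v : G.V, K = {u : G.V | G.SameComp v u}}

/-- The restricted follower set of `v` : words labelling walks starting at `v`
that stay inside the strongly connected component of `v`. -/
def FollowR (G : LGraph A) (v : G.V) : Set (List A) :=
  {w | ∃ (u : G.V) (es : List G.E), G.Walk v u es ∧ es.map G.lab = w ∧
        ∀ e ∈ es, G.SameComp v (G.s e) ∧ G.SameComp v (G.t e)}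

/-- Two vertices are linked iff their restricted follower sets have infinite
intersection. -/
def Linked (G : LGraph A) (u v : G.V) : Prop := (G.FollowR u ∩ G.FollowR v).Infinite

/-- `≈` : the reflexive-transitive closure of the linked relation. -/
def Approx (G : LGraph A) : G.V → G.V → Prop := Relation.ReflTransGen G.Linked

/-- One step in the linking graph `G/≈` (lifted to `G`): either an edge of `G`
or a jump between linked vertices. -/
def GenStep (G : LGraph A) (u v : G.V) : Prop := G.EdgeRel u v ∨ G.Linked u v

/-- Reachability in the linking graph `G/≈`, expressed on vertices of `G`. -/
def GenReach (G : LGraph A) : G.V → G.V → Prop := Relation.ReflTransGen G.GenStep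

/-- The language of `G` : words labelling finite walks in `G`. -/
def Lang (G : LGraph A) : Set (List A) :=
  {w | ∃ (u v : G.V) (es : List G.E), G.Walk u v es ∧ es.map G.lab = w}

/-- `w` has a presentation in the subgraph of `G` induced by the vertex set `S`. -/
def PresIn (G : LGraph A) (S : Set G.V) (w : List A) : Prop :=
  ∃ (u v : G.V) (es : List G.E), G.Walk u v es ∧ es.map G.lab = w ∧
    u ∈ S ∧ v ∈ S ∧ ∀ e ∈ es, G.s e ∈ S ∧ G.t e ∈ S

/-- A presentation of the first `n` letters of `w`, with explicit vertex
sequence `v` and edge sequence `e`. -/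
def PresFun (G : LGraph A) (n : ℕ) (w : ℕ → A) (v : ℕ → G.V) (e : ℕ → G.E) : Prop :=
  ∀ i < n, G.s (e i) = v i ∧ G.t (e i) = v (i + 1) ∧ G.lab (e i) = w i

/-- `S` is a union of `≈`-equivalence classes, i.e. `S = π⁻¹(π(S))` for the
projection `π : G → G/≈`. -/
def SaturatedSet (G : LGraph A) (S : Set G.V) : Prop :=
  ∀ u v : G.V, G.Approx u v → (u ∈ S ↔ v ∈ S)

/-- No edge leaves `S` : together with saturation this says that the image of
`S` in `G/≈` is a terminal subgraph. -/
def ForwardClosed (G : LGraph A) (S : Set G.V) : Prop :=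
  ∀ e : G.E, G.s e ∈ S → G.t e ∈ S

/-- Every vertex has an ingoing and an outgoing edge. -/
def Essential (G : LGraph A) : Prop :=
  ∀ v : G.V, (∃ e : G.E, G.t e = v) ∧ (∃ e : G.E, G.s e = v)

/-- A biinfinite presentation of `x` (vertex sequence `v`, edge sequence `e`)
staying in the vertex set `S`. -/
def BiPresIn (G : LGraph A) (S : Set G.V) (x : ℤ → A) (v : ℤ → G.V) (e : ℤ → G.E) : Prop :=
  ∀ i : ℤ, G.s (e i) = v i ∧ G.t (e i) = v (i + 1) ∧ G.lab (e i) = x i ∧ v i ∈ S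

/-- The subshift of biinfinite label sequences of biinfinite walks of `G`
staying in `S`. -/
def SigmaIn (G : LGraph A) (S : Set G.V) : Set (ℤ → A) :=
  {x | ∃ v e, G.BiPresIn S x v e}

/-- The sofic subshift `Σ(G)`. -/
def Sigma' (G : LGraph A) : Set (ℤ → A) := G.SigmaIn Set.univ

/-- The linking graph `G/≈` is strongly connected. -/
def StronglyConnectedQuot (G : LGraph A) : Prop := ∀ u v : G.V, G.GenReach u v

/-- The linking graph `G/≈` is periodic : its vertices can be partitioned into
`n > 1` classes (indexed by `ZMod n`, each a union of `≈`-classes) so that every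
edge advances the class index by one. -/
def PeriodicQuot (G : LGraph A) : Prop :=
  ∃ n : ℕ, 1 < n ∧ ∃ c : G.V → ZMod n,
    (∀ u v : G.V, G.Approx u v → c u = c v) ∧ ∀ e : G.E, c (G.t e) = c (G.s e) + 1

/-- The label product `G * H`. -/
def labelProduct (G H : LGraph A) : LGraph A where
  V := G.V × H.V
  E := {p : G.E × H.E // G.lab p.1 = H.lab p.2}
  s := fun p => (G.s p.1.1, H.s p.1.2)
  t := fun p => (G.t p.1.1, H.t p.1.2)
  lab := fun p => G.lab p.1.1

end LGraph

section Subshift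

variable {A : Type}

/-- The shift map `σ`. -/
def shift (x : ℤ → A) : ℤ → A := fun i => x (i + 1)

open Classical in
/-- The metric `ρ(x,y) = 2^{-n}` where `n` is minimal with `x_n ≠ y_n` or
`x_{-n} ≠ y_{-n}` (and `ρ(x,x) = 0`). -/
noncomputable def rho (x y : ℤ → A) : ℝ :=
  if x = y then 0
  else (2 : ℝ) ^ (-((sInf {n : ℕ | ∃ i : ℤ, i.natAbs = n ∧ x i ≠ y i} : ℕ) : ℤ))

/-- Closedness with respect to the metric `rho`. -/
def RhoClosed (Sig : Set (ℤ → A)) : Prop :=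
  ∀ x : ℤ → A, (∀ ε : ℝ, 0 < ε → ∃ y ∈ Sig, rho x y < ε) → x ∈ Sig

/-- A subshift : a closed, strongly shift-invariant subset of `A^ℤ`. -/
def IsSubshift (Sig : Set (ℤ → A)) : Prop :=
  RhoClosed Sig ∧ shift '' Sig = Sig

/-- The language of the subshift `Sig` : all finite factors of its points. -/
def lang (Sig : Set (ℤ → A)) : Set (List A) :=
  {w | ∃ x ∈ Sig, ∃ k : ℤ, ∀ (i : ℕ) (h : i < w.length), w.get ⟨i, h⟩ = x (k + i)}

/-- The central factor `x_{[-l,l]}` of a biinfinite word. -/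
def central (x : ℤ → A) (l : ℕ) : List A :=
  (List.range (2 * l + 1)).map fun i => x ((i : ℤ) - (l : ℤ))

/-- `ChainWord L u v n w` : `w` is a chain of length `n` from `u` to `v` in the
language `L` : `|w| = n + |u|`, `w` has prefix `u` and suffix `v`, and every
factor of `w` of length at most `|u|` belongs to `L`. -/
def ChainWord (L : Set (List A)) (u v : List A) (n : ℕ) (w : List A) : Prop :=
  u.length = v.length ∧ w.length = n + u.length ∧
  w.take u.length = u ∧ w.drop n = v ∧
  ∀ z : List A, z <:+: w → z.length ≤ u.length → z ∈ L

/-- An `ε`-chain of length `n > 0` from `x` to `y` inside `Sig`. -/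
def EpsChain (Sig : Set (ℤ → A)) (ε : ℝ) (n : ℕ) (x y : ℤ → A) : Prop :=
  0 < n ∧ ∃ z : ℕ → ℤ → A, z 0 = x ∧ z n = y ∧ (∀ i ≤ n, z i ∈ Sig) ∧
    ∀ i < n, rho (shift (z i)) (z (i + 1)) < ε

/-- The chain relation of `(Sig, σ)`. -/
def ChainRel (Sig : Set (ℤ → A)) (x y : ℤ → A) : Prop :=
  ∀ ε : ℝ, 0 < ε → ∃ n : ℕ, EpsChain Sig ε n x y

/-- Chain-transitivity. -/
def ChainTransitive (Sig : Set (ℤ → A)) : Prop :=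
  ∀ x ∈ Sig, ∀ y ∈ Sig, ChainRel Sig x y

/-- Chain-mixing. -/
def ChainMixing (Sig : Set (ℤ → A)) : Prop :=
  ∀ x ∈ Sig, ∀ y ∈ Sig, ∀ ε : ℝ, 0 < ε → ∃ k : ℕ, ∀ n, k < n → EpsChain Sig ε n x y

/-- Distance from a point to a set, with respect to `rho`. -/
noncomputable def distTo (x : ℤ → A) (Y : Set (ℤ → A)) : ℝ := sInf (rho x '' Y)

/-- `Y` is an attractor of the dynamical system `(Sig, σ)`. -/
def IsAttractor (Sig Y : Set (ℤ → A)) : Prop :=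
  Y.Nonempty ∧ Y ⊆ Sig ∧ RhoClosed Y ∧ shift '' Y = Y ∧
  (∀ ε : ℝ, 0 < ε → ∃ δ : ℝ, 0 < δ ∧ ∀ x ∈ Sig, distTo x Y < δ →
    ∀ n : ℕ, 0 < n → distTo (shift^[n] x) Y < ε) ∧
  (∃ δ : ℝ, 0 < δ ∧ ∀ x ∈ Sig, distTo x Y < δ →
    Filter.Tendsto (fun n : ℕ => distTo (shift^[n] x) Y) Filter.atTop (nhds 0))

end Subshift
section Helpers
variable {A : Type}

open Relation

lemma rho_self (x : ℤ → A) : rho x x = 0 := by simp [rho]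

lemma shift_iter (x : ℤ → A) (n : ℕ) (t : ℤ) : shift^[n] x t = x (t + n) := by
  induction n generalizing x t with
  | zero => simp
  | succ k ih =>
    rw [Function.iterate_succ_apply, ih]
    simp [shift]
    ring_nf

lemma rho_lt_of_agree {x y : ℤ → A} {l : ℕ} {ε : ℝ}
    (hε : (2:ℝ) ^ (-(l+1:ℤ)) < ε)
    (h : ∀ i : ℤ, i.natAbs ≤ l → x i = y i) : rho x y < ε := by
  unfold rho
  split
  · exact lt_trans (by positivity) hε
  · next hne =>
    set m := sInf {n : ℕ | ∃ i : ℤ, i.natAbs = n ∧ x i ≠ y i} with hm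
    have hT : {n : ℕ | ∃ i : ℤ, i.natAbs = n ∧ x i ≠ y i}.Nonempty := by
      have : ∃ i : ℤ, x i ≠ y i := by
        by_contra hc
        push_neg at hc
        exact hne (funext hc)
      obtain ⟨i, hi⟩ := this
      exact ⟨i.natAbs, i, rfl, hi⟩
    obtain ⟨i, hi, hxy⟩ := Nat.sInf_mem hT
    have hge : l + 1 ≤ m := by
      by_contra hc
      push_neg at hc
      have : i.natAbs ≤ l := by omega
      exact hxy (h i this)
    calc (2:ℝ) ^ (-(m : ℤ))
        ≤ (2:ℝ) ^ (-(l+1:ℤ)) := by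
          apply zpow_le_zpow_right₀ one_le_two
          omega
      _ < ε := hε

lemma agree_of_rho_lt {x y : ℤ → A} {l : ℕ}
    (h : rho x y < (2:ℝ) ^ (-(l:ℤ))) : ∀ i : ℤ, i.natAbs ≤ l → x i = y i := by
  intro i hi
  unfold rho at h
  split at h
  · next heq => rw [heq]
  · next hne =>
    by_contra hxy
    set m := sInf {n : ℕ | ∃ i : ℤ, i.natAbs = n ∧ x i ≠ y i} with hm
    have hmem : i.natAbs ∈ {n : ℕ | ∃ i : ℤ, i.natAbs = n ∧ x i ≠ y i} := ⟨i, rfl, hxy⟩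
    have hle : m ≤ i.natAbs := Nat.sInf_le hmem
    have h2 : (-(l:ℤ)) ≤ (-(m : ℤ)) := by omega
    have := zpow_le_zpow_right₀ (one_le_two (α := ℝ)) h2
    linarith

/-- A single chain step. -/
def Step (Sig : Set (ℤ → A)) (ε : ℝ) (a b : ℤ → A) : Prop :=
  a ∈ Sig ∧ b ∈ Sig ∧ rho (shift a) b < ε

lemma epschain_iff_transgen {Sig : Set (ℤ → A)} {ε : ℝ} {x y : ℤ → A} :
    (∃ n, EpsChain Sig ε n x y) ↔ TransGen (Step Sig ε) x y := by
  constructor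
  · rintro ⟨n, hn, z, hz0, hzn, hmem, hstep⟩
    have key : ∀ k, 0 < k → k ≤ n → TransGen (Step Sig ε) x (z k) := by
      intro k
      induction k with
      | zero => omega
      | succ m ih =>
        intro _ hle
        have hs : Step Sig ε (z m) (z (m+1)) :=
          ⟨hmem m (by omega), hmem (m+1) hle, hstep m (by omega)⟩
        rcases Nat.eq_zero_or_pos m with hm | hm
        · subst hm; rw [← hz0]; exact TransGen.single (hz0 ▸ hs)
        · exact TransGen.tail (ih hm (by omega)) hs
    rw [← hzn]; exact key n hn le_rfl
  · intro h
    induction h with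
    | @single b hs =>
      refine ⟨1, by norm_num, fun k => if k = 0 then x else b, by simp, by simp, ?_, ?_⟩
      · intro i hi
        rcases Nat.eq_zero_or_pos i with h'|h'
        · simp [h', hs.1]
        · have : i ≠ 0 := by omega
          simp [this, hs.2.1]
      · intro i hi
        interval_cases i
        simpa using hs.2.2
    | @tail b c hab hbc ih =>
      obtain ⟨n, hn, z, hz0, hzn, hmem, hstep⟩ := ih
      refine ⟨n+1, by omega, fun k => if k ≤ n then z k else c, by simp [hz0], by simp, ?_, ?_⟩
      · intro i hi
        by_cases h' : i ≤ n
        · simpa [h'] using hmem i h'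
        · simpa [h'] using hbc.2.1
      · intro i hi
        by_cases h' : i < n
        · have h1 : i ≤ n := by omega
          have h2 : i + 1 ≤ n := by omega
          simpa [h1, h2] using hstep i h'
        · have hieq : i = n := by omega
          subst hieq
          have h1 : i ≤ i := le_refl i
          have h2 : ¬ (i + 1 ≤ i) := by omega
          simpa [h1, h2, hzn] using hbc.2.2

end Helpers
namespace LGraph
variable {A : Type} {G : LGraph A}

open Relation

lemma walk_append {a b c : G.V} {es fs : List G.E}
    (h1 : G.Walk a b es) (h2 : G.Walk b c fs) : G.Walk a c (es ++ fs) := by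
  induction h1 with
  | nil v => simpa using h2
  | cons e h ih => exact Walk.cons e (ih h2)

lemma exists_walk_of_reach {a b : G.V} (h : G.Reach a b) : ∃ es, G.Walk a b es := by
  induction h with
  | refl => exact ⟨[], Walk.nil a⟩
  | tail hab hbc ih =>
    obtain ⟨es, hw⟩ := ih
    obtain ⟨e, he1, he2⟩ := hbc
    refine ⟨es ++ [e], walk_append hw ?_⟩
    rw [← he1, ← he2]
    exact Walk.cons e (Walk.nil _)

lemma reach_refl (a : G.V) : G.Reach a a := ReflTransGen.refl

lemma genReach_of_reach {a b : G.V} (h : G.Reach a b) : G.GenReach a b :=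
  ReflTransGen.mono (fun _ _ he => Or.inl he) _ _ h

lemma genReach_trans {a b c : G.V} (h1 : G.GenReach a b) (h2 : G.GenReach b c) :
    G.GenReach a c := ReflTransGen.trans h1 h2

lemma linked_symm {a b : G.V} (h : G.Linked a b) : G.Linked b a := by
  unfold Linked at *
  rwa [Set.inter_comm]

lemma sameComp_trans {a b c : G.V} (h1 : G.SameComp a b) (h2 : G.SameComp b c) :
    G.SameComp a c := ⟨ReflTransGen.trans h1.1 h2.1, ReflTransGen.trans h2.2 h1.2⟩

lemma walk_nil_eq {a b : G.V} (h : G.Walk a b []) : a = b := by cases h; rfl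

lemma walk_end_mem {a b : G.V} {es : List G.E} (h : G.Walk a b es) (hne : es ≠ []) :
    ∃ e ∈ es, G.t e = b := by
  induction h with
  | nil v => exact absurd rfl hne
  | @cons w es' e h ih =>
    rcases List.eq_nil_or_concat es' with h' | h'
    · subst h'
      exact ⟨e, by simp, walk_nil_eq h⟩
    · have hne' : es' ≠ [] := by
        obtain ⟨l, f, rfl⟩ := h'
        simp
      obtain ⟨f, hf1, hf2⟩ := ih hne'
      exact ⟨f, by simp [hf1], hf2⟩

/-- vertex after `n` steps along a list walk -/
def wVert : List G.E → G.V → ℕ → G.V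
  | [], a, _ => a
  | _ :: _, a, 0 => a
  | e :: es, _, (n+1) => wVert es (G.t e) n

@[simp] lemma wVert_zero (es : List G.E) (a : G.V) : wVert es a 0 = a := by
  cases es <;> rfl

lemma walk_wVert_s {a b : G.V} {es : List G.E} (h : G.Walk a b es) :
    ∀ i (hi : i < es.length), G.s (es[i]) = wVert es a i := by
  induction h with
  | nil v => intro i hi; simp at hi
  | cons e h ih =>
    intro i hi
    cases i with
    | zero => simp [wVert]
    | succ n => simpa [wVert] using ih n (by simpa using hi)

lemma walk_wVert_t {a b : G.V} {es : List G.E} (h : G.Walk a b es) :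
    ∀ i (hi : i < es.length), G.t (es[i]) = wVert es a (i+1) := by
  induction h with
  | nil v => intro i hi; simp at hi
  | cons e h ih =>
    intro i hi
    cases i with
    | zero => simp [wVert, wVert_zero]
    | succ n => simpa [wVert] using ih n (by simpa using hi)

lemma walk_wVert_len {a b : G.V} {es : List G.E} (h : G.Walk a b es) :
    wVert es a es.length = b := by
  induction h with
  | nil v => rfl
  | cons e h ih => simpa [wVert] using ih

/-- biinfinite walks -/
structure BW (G : LGraph A) where
  v : ℤ → G.V
  e : ℤ → G.E
  hs : ∀ i, G.s (e i) = v i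
  ht : ∀ i, G.t (e i) = v (i+1)

/-- the labelling point of a biinfinite walk -/
def BW.pt (B : BW G) : ℤ → A := fun i => G.lab (B.e i)

lemma BW.mem (B : BW G) : B.pt ∈ G.Sigma' :=
  ⟨B.v, B.e, fun i => ⟨B.hs i, B.ht i, rfl, trivial⟩⟩

def BW.shf (B : BW G) (k : ℤ) : BW G where
  v := fun i => B.v (i + k)
  e := fun i => B.e (i + k)
  hs := fun i => B.hs (i + k)
  ht := fun i => by have := B.ht (i + k); rwa [show i + k + 1 = i + 1 + k by ring] at this

@[simp] lemma BW.shf_pt (B : BW G) (k i : ℤ) : (B.shf k).pt i = B.pt (i + k) := rfl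

lemma BW.shift_pt (B : BW G) : shift B.pt = (B.shf 1).pt := rfl

lemma BW.reach (B : BW G) {i j : ℤ} (h : i ≤ j) : G.Reach (B.v i) (B.v j) := by
  obtain ⟨k, rfl⟩ : ∃ k : ℕ, j = i + k := ⟨(j - i).toNat, by omega⟩
  clear h
  induction k with
  | zero => simpa using reach_refl _
  | succ m ih =>
    refine ReflTransGen.tail ?_ ⟨B.e (i + m), B.hs _, ?_⟩
    · exact_mod_cast ih
    · rw [B.ht (i + m)]; congr 1; push_cast; ring

/-- segment of edges of a biinfinite walk -/
def segE (e : ℤ → G.E) (c : ℤ) : ℕ → List G.E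
  | 0 => []
  | (k+1) => e c :: segE e (c+1) k

@[simp] lemma segE_length (e : ℤ → G.E) (c : ℤ) (k : ℕ) : (segE e c k).length = k := by
  induction k generalizing c with
  | zero => rfl
  | succ m ih => simp [segE, ih]

lemma segE_walk (B : BW G) (c : ℤ) (k : ℕ) : G.Walk (B.v c) (B.v (c + k)) (segE B.e c k) := by
  induction k generalizing c with
  | zero => simpa [segE] using Walk.nil _
  | succ m ih =>
    have h1 : G.s (B.e c) = B.v c := B.hs c
    have := Walk.cons (G := G) (B.e c) (w := B.v (c + (m+1))) (es := segE B.e (c+1) m) ?_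
    · rwa [h1] at this
    · rw [B.ht c]
      have := ih (c + 1)
      rwa [show c + 1 + (m:ℤ) = c + (↑m + 1) by ring] at this

lemma segE_mem {e : ℤ → G.E} {c : ℤ} {k : ℕ} {f : G.E} (h : f ∈ segE e c k) :
    ∃ t, c ≤ t ∧ t < c + k ∧ f = e t := by
  induction k generalizing c with
  | zero => simp [segE] at h
  | succ m ih =>
    simp only [segE, List.mem_cons] at h
    rcases h with h | h
    · exact ⟨c, le_refl c, by omega, h⟩
    · obtain ⟨t, h1, h2, h3⟩ := ih h
      exact ⟨t, by omega, by omega, h3⟩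

lemma segE_get {e : ℤ → G.E} {c : ℤ} {k : ℕ} (j : ℕ) (hj : j < k) :
    (segE e c k)[j]'(by simpa using hj) = e (c + j) := by
  induction k generalizing c j with
  | zero => omega
  | succ m ih =>
    cases j with
    | zero => simp [segE]
    | succ i =>
      have := ih (c := c+1) (j := i) (by omega)
      simpa [segE, show c + 1 + (i:ℤ) = c + (↑i + 1) by ring] using this

lemma segE_lab_eq {e1 e2 : ℤ → G.E} {c1 c2 : ℤ} {k : ℕ}
    (h : ∀ j : ℕ, j < k → G.lab (e1 (c1 + j)) = G.lab (e2 (c2 + j))) :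
    (segE e1 c1 k).map G.lab = (segE e2 c2 k).map G.lab := by
  induction k generalizing c1 c2 with
  | zero => rfl
  | succ m ih =>
    simp only [segE, List.map_cons]
    congr 1
    · simpa using h 0 (by omega)
    · refine ih (fun j hj => ?_)
      have := h (j+1) (by omega)
      push_cast at this ⊢
      simpa [show c1 + (↑j + 1) = c1 + 1 + (j:ℤ) by ring,
             show c2 + (↑j + 1) = c2 + 1 + (j:ℤ) by ring] using this

end LGraph
namespace LGraph
variable {A : Type} {G : LGraph A}

/-- one-sided infinite walks from a vertex -/
structure Ray (G : LGraph A) (a : G.V) where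
  v : ℕ → G.V
  e : ℕ → G.E
  hs : ∀ i, G.s (e i) = v i
  ht : ∀ i, G.t (e i) = v (i+1)
  h0 : v 0 = a

/-- a ray obtained as the forward part of a biinfinite walk -/
def rayOfBW (B : BW G) (c : ℤ) : Ray G (B.v c) where
  v := fun i => B.v (c + i)
  e := fun i => B.e (c + i)
  hs := fun i => B.hs _
  ht := fun i => by
    have := B.ht (c + i)
    rwa [show c + (i:ℤ) + 1 = c + (↑i + 1) by ring] at this
  h0 := by simp

/-- prepend a finite walk to a ray -/
def listRay {a b : G.V} {es : List G.E} (h : G.Walk a b es) (hne : es ≠ []) (R : Ray G b) :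
    Ray G a where
  v := fun i => if hi : i < es.length then wVert es a i else R.v (i - es.length)
  e := fun i => if hi : i < es.length then es[i] else R.e (i - es.length)
  hs := fun i => by
    by_cases hi : i < es.length
    · simp only [hi, dif_pos]
      exact walk_wVert_s h i hi
    · simp only [hi, dif_neg, not_false_iff]
      exact R.hs _
  ht := fun i => by
    by_cases hi : i < es.length
    · simp only [hi, dif_pos]
      by_cases hi1 : i + 1 < es.length
      · simp only [hi1, dif_pos]
        exact walk_wVert_t h i hi
      · have hlen : i + 1 = es.length := by omega
        simp only [hi1, dif_neg, not_false_iff]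
        rw [walk_wVert_t h i hi, hlen, walk_wVert_len h, Nat.sub_self]
        exact (R.h0).symm
    · have hi1 : ¬ (i + 1 < es.length) := by omega
      simp only [hi, hi1, dif_neg, not_false_iff]
      rw [show i + 1 - es.length = (i - es.length) + 1 by omega]
      exact R.ht _
  h0 := by
    by_cases h0 : 0 < es.length
    · simp [h0]
    · have : es = [] := by
        cases es
        · rfl
        · simp at h0
      exact absurd this hne

lemma listRay_e_lt {a b : G.V} {es : List G.E} (h : G.Walk a b es) (hne : es ≠ [])
    (R : Ray G b) {i : ℕ} (hi : i < es.length) : (listRay h hne R).e i = es[i] := by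
  simp [listRay, hi]

lemma listRay_e_ge {a b : G.V} {es : List G.E} (h : G.Walk a b es) (hne : es ≠ [])
    (R : Ray G b) {i : ℕ} (hi : es.length ≤ i) :
    (listRay h hne R).e i = R.e (i - es.length) := by
  have : ¬ (i < es.length) := by omega
  simp [listRay, this]

/-- the periodic ray tracing a closed walk -/
def cycRay {a : G.V} {es : List G.E} (h : G.Walk a a es) (hne : es ≠ []) : Ray G a where
  v := fun i => wVert es a (i % es.length)
  e := fun i => es[i % es.length]'(Nat.mod_lt _ (List.length_pos_iff.mpr hne))
  hs := fun i => walk_wVert_s h _ _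
  ht := fun i => by
    have hL : 0 < es.length := List.length_pos_iff.mpr hne
    show _ = wVert es a ((i+1) % es.length)
    rw [walk_wVert_t h _ (Nat.mod_lt _ hL)]
    have hmod : (i+1) % es.length = (i % es.length + 1) % es.length := by
      conv_lhs => rw [show i + 1 = (i % es.length + 1) + es.length * (i / es.length) by
        have := Nat.mod_add_div i es.length; omega]
      exact Nat.add_mul_mod_self_left _ _ _
    by_cases hb : i % es.length + 1 < es.length
    · rw [hmod, Nat.mod_eq_of_lt hb]
    · have heq : i % es.length + 1 = es.length := by
        have := Nat.mod_lt i hL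
        omega
      rw [hmod, heq, Nat.mod_self, walk_wVert_len h, wVert_zero]
  h0 := by
    have : 0 % es.length = 0 := Nat.zero_mod _
    simp [this]

lemma cycRay_e_lt {a : G.V} {es : List G.E} (h : G.Walk a a es) (hne : es ≠ [])
    {i : ℕ} (hi : i < es.length) :
    (cycRay h hne).e i = es[i] := by
  simp only [cycRay]
  congr 1
  exact Nat.mod_eq_of_lt hi

/-- replace the future of a biinfinite walk by a ray -/
def spliceBR (B : BW G) (c : ℤ) (R : Ray G (B.v c)) : BW G where
  v := fun i => if i < c then B.v i else R.v (i - c).toNat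
  e := fun i => if i < c then B.e i else R.e (i - c).toNat
  hs := fun i => by
    by_cases hi : i < c
    · simp only [hi, if_pos]; exact B.hs i
    · simp only [hi, if_neg, not_false_iff]; exact R.hs _
  ht := fun i => by
    by_cases hi : i < c
    · simp only [hi, if_pos]
      by_cases hi1 : i + 1 < c
      · simp only [hi1, if_pos]; exact B.ht i
      · have : i + 1 = c := by omega
        simp only [hi1, if_neg, not_false_iff]
        rw [B.ht i, this]
        have : (c - c).toNat = 0 := by omega
        rw [this, R.h0]
    · have hi1 : ¬ (i + 1 < c) := by omega
      simp only [hi, hi1, if_neg, not_false_iff]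
      rw [show (i + 1 - c).toNat = (i - c).toNat + 1 by omega]
      exact R.ht _

lemma spliceBR_e_lt (B : BW G) (c : ℤ) (R : Ray G (B.v c)) {i : ℤ} (hi : i < c) :
    (spliceBR B c R).e i = B.e i := by simp [spliceBR, hi]

lemma spliceBR_e_ge (B : BW G) (c : ℤ) (R : Ray G (B.v c)) {i : ℤ} (hi : c ≤ i) :
    (spliceBR B c R).e i = R.e (i - c).toNat := by
  have : ¬ (i < c) := by omega
  simp [spliceBR, this]

/-- biinfinite walk: periodic in the past on a closed walk, then a ray -/
def cycBW {a : G.V} {es : List G.E} (h : G.Walk a a es) (hne : es ≠ []) (R : Ray G a) :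
    BW G where
  v := fun i => if i < 0 then wVert es a (i % (es.length : ℤ)).toNat else R.v i.toNat
  e := fun i => if i < 0 then es[(i % (es.length : ℤ)).toNat]'(by
        have hL : 0 < (es.length : ℤ) := by
          exact_mod_cast List.length_pos_iff.mpr hne
        have h1 := Int.emod_nonneg i (ne_of_gt hL)
        have h2 := Int.emod_lt_of_pos i hL
        omega)
      else R.e i.toNat
  hs := fun i => by
    have hL : 0 < (es.length : ℤ) := by exact_mod_cast List.length_pos_iff.mpr hne
    by_cases hi : i < 0
    · simp only [hi, if_pos]
      exact walk_wVert_s h _ _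
    · simp only [hi, if_neg, not_false_iff]
      exact R.hs _
  ht := fun i => by
    have hL : 0 < (es.length : ℤ) := by exact_mod_cast List.length_pos_iff.mpr hne
    have h1 := Int.emod_nonneg i (ne_of_gt hL)
    have h2 := Int.emod_lt_of_pos i hL
    show _ = (if i + 1 < 0 then wVert es a ((i+1) % (es.length : ℤ)).toNat else R.v (i+1).toNat)
    by_cases hi : i < 0
    · simp only [hi, if_pos]
      have hidx : (i % (es.length : ℤ)).toNat < es.length := by omega
      rw [walk_wVert_t h _ hidx]
      by_cases hi1 : i + 1 < 0
      · simp only [hi1, if_pos]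
        have h3 := Int.emod_nonneg (i+1) (ne_of_gt hL)
        have h4 := Int.emod_lt_of_pos (i+1) hL
        have hmod : (i + 1) % (es.length : ℤ) = (i % (es.length : ℤ) + 1) % (es.length : ℤ) := by
          conv_lhs => rw [show i + 1 = (i % (es.length : ℤ) + 1) + (es.length : ℤ) * (i / (es.length : ℤ)) by
            rw [Int.emod_def]; ring]
          exact Int.add_mul_emod_self_left _ _ _
        by_cases hb : i % (es.length : ℤ) + 1 < (es.length : ℤ)
        · have h5 : (i + 1) % (es.length : ℤ) = i % (es.length : ℤ) + 1 := by
            rw [hmod]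
            exact Int.emod_eq_of_lt (by omega) hb
          rw [h5]
          congr 1
          omega
        · have heq : i % (es.length : ℤ) + 1 = (es.length : ℤ) := by omega
          have : (i + 1) % (es.length : ℤ) = 0 := by
            rw [hmod, heq, Int.emod_self]
          rw [this]
          have : ((i % (es.length : ℤ)).toNat + 1) = es.length := by omega
          rw [this, walk_wVert_len h]
          simp
      · have hi0 : i = -1 := by omega
        simp only [hi1, if_neg, not_false_iff]
        subst hi0
        have : (-1 : ℤ) % (es.length : ℤ) = (es.length : ℤ) - 1 := by
          rw [show (-1 : ℤ) = ((es.length : ℤ) - 1) + (es.length : ℤ) * (-1) by ring]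
          rw [Int.add_mul_emod_self_left]
          exact Int.emod_eq_of_lt (by omega) (by omega)
        rw [this]
        have : ((es.length : ℤ) - 1).toNat + 1 = es.length := by omega
        rw [this, walk_wVert_len h]
        simp [R.h0]
    · have hi1 : ¬ (i + 1 < 0) := by omega
      simp only [hi, hi1, if_neg, not_false_iff]
      rw [show (i + 1).toNat = i.toNat + 1 by omega]
      exact R.ht _

lemma cycBW_e_ge {a : G.V} {es : List G.E} (h : G.Walk a a es) (hne : es ≠ [])
    (R : Ray G a) {i : ℤ} (hi : 0 ≤ i) : (cycBW h hne R).e i = R.e i.toNat := by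
  have : ¬ (i < 0) := by omega
  simp [cycBW, this]

lemma cycBW_v_zero {a : G.V} {es : List G.E} (h : G.Walk a a es) (hne : es ≠ [])
    (R : Ray G a) : (cycBW h hne R).v 0 = a := by
  simp [cycBW, R.h0]

end LGraph
namespace LGraph
variable {A : Type} [Finite A] {G : LGraph A}

open Relation

lemma exists_long_of_infinite {W : Set (List A)} (h : W.Infinite) (L : ℕ) :
    ∃ w ∈ W, L ≤ w.length := by
  by_contra hc
  push_neg at hc
  refine h (Set.Finite.subset (List.finite_length_lt A L) (fun w hw => ?_))
  exact hc w hw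

lemma walk_sameComp_end {a c : G.V} {es : List G.E} (hw : G.Walk a c es) (hne : es ≠ [])
    (hscc : ∀ e ∈ es, G.SameComp a (G.s e) ∧ G.SameComp a (G.t e)) :
    G.SameComp a c := by
  obtain ⟨e, he, het⟩ := walk_end_mem hw hne
  rw [← het]
  exact (hscc e he).2

lemma exists_ret {a c : G.V} {es : List G.E} (hw : G.Walk a c es) (hne : es ≠ [])
    (hscc : ∀ e ∈ es, G.SameComp a (G.s e) ∧ G.SameComp a (G.t e)) :
    ∃ fs, G.Walk c a fs :=
  exists_walk_of_reach (walk_sameComp_end hw hne hscc).2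

/-- data extracted from a `Linked` pair: a long common word with closing walks -/
lemma linked_struct {a b : G.V} (h : G.Linked a b) (L : ℕ) :
    ∃ (w : List A) (es fs es' fs' : List G.E),
      G.Walk a a (es ++ fs) ∧ G.Walk b b (es' ++ fs') ∧ es.map G.lab = w ∧
      es'.map G.lab = w ∧ L ≤ w.length := by
  obtain ⟨w, ⟨hwa, hwb⟩, hL⟩ := exists_long_of_infinite h (L+1)
  obtain ⟨c, es, hes, hlab, hscc⟩ := hwa
  obtain ⟨c', es', hes', hlab', hscc'⟩ := hwb
  have hne : es ≠ [] := by
    intro h'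
    have : w.length = 0 := by rw [← hlab, h']; simp
    omega
  have hne' : es' ≠ [] := by
    intro h'
    have : w.length = 0 := by rw [← hlab', h']; simp
    omega
  obtain ⟨fs, hfs⟩ := exists_ret hes hne hscc
  obtain ⟨fs', hfs'⟩ := exists_ret hes' hne' hscc'
  exact ⟨w, es, fs, es', fs', walk_append hes hfs, walk_append hes' hfs', hlab, hlab',
    by omega⟩

lemma shift_shf_pt (B : BW G) (c : ℤ) : shift ((B.shf c).pt) = (B.shf (c+1)).pt := by
  funext t
  show G.lab (B.e (t + 1 + c)) = G.lab (B.e (t + (c + 1)))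
  congr 1
  ring

lemma shf_zero_pt (B : BW G) : (B.shf 0).pt = B.pt := by
  funext t
  show G.lab (B.e (t + 0)) = G.lab (B.e t)
  congr 1
  ring

variable {ε : ℝ}

lemma step_shf (hε : 0 < ε) (B : BW G) (c : ℤ) :
    Step G.Sigma' ε ((B.shf c).pt) ((B.shf (c+1)).pt) := by
  refine ⟨(B.shf c).mem, (B.shf (c+1)).mem, ?_⟩
  rw [shift_shf_pt, rho_self]
  exact hε

lemma rtg_shf (hε : 0 < ε) (B : BW G) (c : ℤ) (k : ℕ) :
    ReflTransGen (Step G.Sigma' ε) ((B.shf c).pt) ((B.shf (c + k)).pt) := by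
  induction k with
  | zero => simpa using ReflTransGen.refl
  | succ m ih =>
    refine ReflTransGen.tail ih ?_
    have : c + (↑(m+1) : ℤ) = (c + m) + 1 := by push_cast; ring
    rw [this]
    exact step_shf hε B (c + m)

lemma rtg_shf' (hε : 0 < ε) (B : BW G) {c d : ℤ} (h : c ≤ d) :
    ReflTransGen (Step G.Sigma' ε) ((B.shf c).pt) ((B.shf d).pt) := by
  have := rtg_shf hε (G := G) B c (d - c).toNat
  rwa [show c + ((d-c).toNat : ℤ) = d by omega] at this

/-- the inductive construction of chains along a `GenReach` path -/
lemma good_of_genReach {ε : ℝ} (hε : 0 < ε) (l : ℕ) (hl : (2:ℝ) ^ (-(l+1:ℤ)) < ε)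
    (By : BW G) (M' : ℤ) (hM' : M' ≤ -(l:ℤ) - 2) :
    ∀ u : G.V, G.GenReach u (By.v M') →
      ∃ R : Ray G u, ∀ B : BW G, (∀ i : ℤ, 0 ≤ i → B.e i = R.e i.toNat) →
        TransGen (Step G.Sigma' ε) B.pt By.pt := by
  intro u hu
  induction hu using ReflTransGen.head_induction_on with
  | refl =>
    refine ⟨rayOfBW By M', fun B hB => ?_⟩
    -- exact shifts to B.shf l, jump to By.shf (M' + l + 1), shifts to By.shf 0
    have rtg1 : ReflTransGen (Step G.Sigma' ε) B.pt ((B.shf l).pt) := by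
      rw [← shf_zero_pt B]
      exact rtg_shf' hε B (by omega)
    have jump : Step G.Sigma' ε ((B.shf l).pt) ((By.shf (M' + l + 1)).pt) := by
      refine ⟨(B.shf l).mem, (By.shf (M' + l + 1)).mem, ?_⟩
      rw [shift_shf_pt]
      refine rho_lt_of_agree hl (fun t ht => ?_)
      have h1 : 0 ≤ t + ((l:ℤ) + 1) := by omega
      show G.lab (B.e (t + ((l:ℤ)+1))) = G.lab (By.e (t + (M' + l + 1)))
      rw [hB _ h1]
      show G.lab (By.e (M' + ((t + ((l:ℤ)+1)).toNat : ℤ))) = _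
      rw [Int.toNat_of_nonneg h1]
      congr 1
      ring
    have rtg2 : ReflTransGen (Step G.Sigma' ε) ((By.shf (M' + l + 1)).pt) By.pt := by
      rw [← shf_zero_pt By]
      exact rtg_shf' hε By (by omega)
    exact TransGen.trans_right rtg1 (TransGen.head' jump rtg2)
  | @head u c hstep htail ih =>
    obtain ⟨R', hR'⟩ := ih
    rcases hstep with ⟨f, hf1, hf2⟩ | hlink
    · -- edge step
      have hw : G.Walk u c [f] := by
        rw [← hf1, ← hf2]
        exact Walk.cons f (Walk.nil _)
      refine ⟨listRay hw (by simp) R', fun B hB => ?_⟩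
      have hstep1 : Step G.Sigma' ε B.pt ((B.shf 1).pt) := by
        have := step_shf hε (G := G) B 0
        rwa [shf_zero_pt, zero_add] at this
      refine TransGen.head hstep1 ?_
      refine hR' (B.shf 1) (fun i hi => ?_)
      show B.e (i + 1) = R'.e i.toNat
      rw [hB (i+1) (by omega)]
      rw [listRay_e_ge hw (by simp) R' (by simp only [List.length_cons, List.length_nil]; omega)]
      congr 1
      simp only [List.length_cons, List.length_nil]
      omega
    · -- linked step
      obtain ⟨w, es, fs, es', fs', hcyc, hcyc', hlab, hlab', hwlen⟩ :=
        linked_struct hlink (2*l+2)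
      have hlen : es.length = w.length := by rw [← hlab]; simp
      have hlen' : es'.length = w.length := by rw [← hlab']; simp
      have hnees : es ≠ [] := by
        intro h'
        have : w.length = 0 := by rw [← hlab, h']; simp
        omega
      have hnees' : es' ≠ [] := by
        intro h'
        have : w.length = 0 := by rw [← hlab', h']; simp
        omega
      have hne : (es ++ fs) ≠ [] := by simp [hnees]
      have hne' : (es' ++ fs') ≠ [] := by simp [hnees']
      refine ⟨cycRay hcyc hne, fun B hB => ?_⟩
      have hDge : (l:ℤ) + 1 ≤ ((es' ++ fs').length : ℤ) := by
        simp only [List.length_append]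
        push_cast
        omega
      have rtg1 : ReflTransGen (Step G.Sigma' ε) B.pt ((B.shf l).pt) := by
        rw [← shf_zero_pt B]
        exact rtg_shf' hε B (by omega)
      have jump : Step G.Sigma' ε ((B.shf l).pt)
          (((cycBW hcyc' hne' (listRay hcyc' hne' R')).shf ((l:ℤ) + 1)).pt) := by
        refine ⟨(B.shf l).mem, ((cycBW hcyc' hne' (listRay hcyc' hne' R')).shf ((l:ℤ)+1)).mem, ?_⟩
        rw [shift_shf_pt]
        refine rho_lt_of_agree hl (fun t ht => ?_)
        have h1 : 0 ≤ t + ((l:ℤ) + 1) := by omega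
        have h2 : (t + ((l:ℤ)+1)).toNat < es.length := by omega
        have h2' : (t + ((l:ℤ)+1)).toNat < es'.length := by omega
        have h2w : (t + ((l:ℤ)+1)).toNat < w.length := by omega
        show G.lab (B.e (t + ((l:ℤ)+1)))
            = G.lab ((cycBW hcyc' hne' (listRay hcyc' hne' R')).e (t + ((l:ℤ) + 1)))
        have q1 : B.e (t + ((l:ℤ)+1)) = es[(t + ((l:ℤ)+1)).toNat]'h2 := by
          rw [hB _ h1, cycRay_e_lt hcyc hne
            (show (t + ((l:ℤ)+1)).toNat < (es ++ fs).length by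
              simp only [List.length_append]; omega)]
          exact List.getElem_append_left h2
        have q2 : (cycBW hcyc' hne' (listRay hcyc' hne' R')).e (t + ((l:ℤ)+1))
            = es'[(t + ((l:ℤ)+1)).toNat]'h2' := by
          rw [cycBW_e_ge hcyc' hne' _ h1, listRay_e_lt hcyc' hne' R'
            (show (t + ((l:ℤ)+1)).toNat < (es' ++ fs').length by
              simp only [List.length_append]; omega)]
          exact List.getElem_append_left h2'
        rw [q1, q2]
        have e1 : w[(t + ((l:ℤ)+1)).toNat]'h2w = G.lab (es[(t + ((l:ℤ)+1)).toNat]'h2) := by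
          rw [List.getElem_of_eq hlab.symm h2w]
          simp
        have e2 : w[(t + ((l:ℤ)+1)).toNat]'h2w = G.lab (es'[(t + ((l:ℤ)+1)).toNat]'h2') := by
          rw [List.getElem_of_eq hlab'.symm h2w]
          simp
        rw [← e1, ← e2]
      have rtg2 : ReflTransGen (Step G.Sigma' ε)
          (((cycBW hcyc' hne' (listRay hcyc' hne' R')).shf ((l:ℤ)+1)).pt)
          (((cycBW hcyc' hne' (listRay hcyc' hne' R')).shf ((es' ++ fs').length : ℤ)).pt) :=
        rtg_shf' hε _ hDge
      have tg3 : TransGen (Step G.Sigma' ε)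
          (((cycBW hcyc' hne' (listRay hcyc' hne' R')).shf ((es' ++ fs').length : ℤ)).pt)
          By.pt := by
        refine hR' _ (fun i hi => ?_)
        show (cycBW hcyc' hne' (listRay hcyc' hne' R')).e (i + ((es' ++ fs').length : ℤ))
            = R'.e i.toNat
        rw [cycBW_e_ge hcyc' hne' _ (by omega),
          listRay_e_ge hcyc' hne' R' (by omega)]
        congr 1
        omega
      exact TransGen.trans_right rtg1 (TransGen.head jump (TransGen.trans_right rtg2 tg3))

end LGraph
namespace LGraph
variable {A : Type} [Finite A] {G : LGraph A}
open Relation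

/-- build a BW from a presentation -/
def bwOfPres {x : ℤ → A} {v : ℤ → G.V} {e : ℤ → G.E} (h : G.BiPresIn Set.univ x v e) :
    BW G := ⟨v, e, fun i => (h i).1, fun i => (h i).2.1⟩

lemma bwOfPres_pt {x : ℤ → A} {v : ℤ → G.V} {e : ℤ → G.E} (h : G.BiPresIn Set.univ x v e) :
    (bwOfPres h).pt = x := by
  funext i
  exact (h i).2.2.1

lemma exists_scale (ε : ℝ) (hε : 0 < ε) : ∃ l : ℕ, (2:ℝ) ^ (-(l+1:ℤ)) < ε := by
  obtain ⟨n, hn⟩ := exists_pow_lt_of_lt_one hε (by norm_num : (1:ℝ)/2 < 1)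
  refine ⟨n, lt_of_le_of_lt ?_ hn⟩
  rw [one_div, inv_pow, ← zpow_natCast (2:ℝ) n, ← zpow_neg]
  apply zpow_le_zpow_right₀ one_le_two
  omega

/-- Part 2: the graph condition implies the chain relation. -/
lemma chainRel_of_genReach {x y : ℤ → A}
    (v : ℤ → G.V) (e : ℤ → G.E) (v' : ℤ → G.V) (e' : ℤ → G.E)
    (hpx : G.BiPresIn Set.univ x v e) (hpy : G.BiPresIn Set.univ y v' e')
    (N M : ℤ)
    (hNp : ∀ i j : ℤ, N ≤ i → N ≤ j → G.GenReach (v i) (v j))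
    (hMp : ∀ i j : ℤ, i ≤ M → j ≤ M → G.GenReach (v' i) (v' j))
    (hNM : G.GenReach (v N) (v' M)) :
    ChainRel G.Sigma' x y := by
  intro ε hε
  obtain ⟨l, hl⟩ := exists_scale ε hε
  rw [epschain_iff_transgen]
  set Bx : BW G := bwOfPres hpx with hBx
  set By : BW G := bwOfPres hpy with hBy
  set N' : ℤ := max N ((l:ℤ) + 2) with hN'
  set M' : ℤ := min M (-(l:ℤ) - 2) with hM'
  have hreach : G.GenReach (Bx.v N') (By.v M') := by
    refine genReach_trans (hNp N' N (by omega) le_rfl)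
      (genReach_trans hNM (hMp M M' le_rfl (by omega)))
  obtain ⟨R, hR⟩ := good_of_genReach hε l hl By M' (by omega) (Bx.v N') hreach
  -- the spliced start walk
  set B0 : BW G := spliceBR Bx N' R with hB0
  have rtg1 : ReflTransGen (Step G.Sigma' ε) Bx.pt ((Bx.shf (N' - l - 2)).pt) := by
    rw [← shf_zero_pt Bx]
    exact rtg_shf' hε Bx (by omega)
  have jump : Step G.Sigma' ε ((Bx.shf (N' - l - 2)).pt) ((B0.shf (N' - l - 1)).pt) := by
    refine ⟨(Bx.shf _).mem, (B0.shf _).mem, ?_⟩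
    rw [shift_shf_pt]
    refine rho_lt_of_agree hl (fun t ht => ?_)
    show G.lab (Bx.e (t + (N' - l - 2 + 1))) = G.lab (B0.e (t + (N' - l - 1)))
    rw [hB0, spliceBR_e_lt Bx N' R (by omega)]
    congr 1
    ring
  have rtg2 : ReflTransGen (Step G.Sigma' ε) ((B0.shf (N' - l - 1)).pt) ((B0.shf N').pt) :=
    rtg_shf' hε B0 (by omega)
  have tg3 : TransGen (Step G.Sigma' ε) ((B0.shf N').pt) By.pt := by
    refine hR (B0.shf N') (fun i hi => ?_)
    show B0.e (i + N') = R.e i.toNat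
    rw [hB0, spliceBR_e_ge Bx N' R (by omega)]
    congr 1
    omega
  have main : TransGen (Step G.Sigma' ε) Bx.pt By.pt :=
    TransGen.trans_right rtg1 (TransGen.head jump (TransGen.trans_right rtg2 tg3))
  rw [bwOfPres_pt hpx] at main
  rw [bwOfPres_pt hpy] at main
  exact main

/-- Part 1: positive shifts are chain related. -/
lemma chainRel_of_shift {x y : ℤ → A} (hx : x ∈ G.Sigma') (n : ℕ) (hn : 0 < n)
    (hsh : shift^[n] x = y) : ChainRel G.Sigma' x y := by
  intro ε hε
  rw [epschain_iff_transgen]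
  obtain ⟨v, e, hp⟩ := hx
  have hpt : (bwOfPres hp).pt = x := bwOfPres_pt hp
  have key : ∀ k : ℕ, 0 < k → TransGen (Step G.Sigma' ε) x (shift^[k] x) := by
    intro k
    induction k with
    | zero => omega
    | succ m ih =>
      intro _
      have hstep : Step G.Sigma' ε (shift^[m] x) (shift^[m+1] x) := by
        refine ⟨?_, ?_, ?_⟩
        · have : shift^[m] x = ((bwOfPres hp).shf m).pt := by
            funext t
            rw [shift_iter]
            show x (t + m) = G.lab (e (t + m))
            exact ((hp (t + m)).2.2.1).symm
          rw [this]
          exact ((bwOfPres hp).shf m).mem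
        · have : shift^[m+1] x = ((bwOfPres hp).shf (m+1)).pt := by
            funext t
            rw [shift_iter]
            show x (t + (m+1)) = G.lab (e (t + (m+1)))
            exact ((hp (t + (m+1))).2.2.1).symm
          rw [this]
          exact ((bwOfPres hp).shf ((m:ℤ)+1)).mem
        · rw [← Function.iterate_succ_apply' shift m x, rho_self]
          exact hε
      rcases Nat.eq_zero_or_pos m with hm | hm
      · subst hm
        simpa using TransGen.single hstep
      · exact TransGen.tail (ih hm) hstep
  rw [← hsh]
  exact key n hn

end LGraph
namespace LGraph
variable {A : Type} [Finite A] {G : LGraph A}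
open Relation

lemma exists_lam :
    ∃ lam : ℕ, 0 < lam ∧ ∀ a b : G.V, ¬ G.Linked a b →
      ∀ w ∈ G.FollowR a ∩ G.FollowR b, w.length < lam := by
  have hF : ∀ p : G.V × G.V,
      (⋃ (_ : ¬ G.Linked p.1 p.2), (G.FollowR p.1 ∩ G.FollowR p.2)).Finite := by
    intro p
    by_cases h : G.Linked p.1 p.2
    · simp [h]
    · simpa [h] using (Set.not_infinite.mp h)
  have hFin : (⋃ p : G.V × G.V, ⋃ (_ : ¬ G.Linked p.1 p.2),
      (G.FollowR p.1 ∩ G.FollowR p.2)).Finite := Set.finite_iUnion hF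
  obtain ⟨m, hm⟩ := (hFin.image List.length).bddAbove
  refine ⟨m + 1, by omega, fun a b hab w hw => ?_⟩
  have : w.length ∈ (⋃ p : G.V × G.V, ⋃ (_ : ¬ G.Linked p.1 p.2),
      (G.FollowR p.1 ∩ G.FollowR p.2)).image List.length := by
    refine ⟨w, ?_, rfl⟩
    exact Set.mem_iUnion.mpr ⟨(a, b), Set.mem_iUnion.mpr ⟨hab, hw⟩⟩
  have := hm this
  omega

lemma sameComp_refl (a : G.V) : G.SameComp a a := ⟨ReflTransGen.refl, ReflTransGen.refl⟩

lemma sameComp_run (B : BW G) (e0 : ℤ) (m : ℕ)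
    (hrun : ∀ s : ℤ, e0 ≤ s → s < e0 + m → G.SameComp (B.v s) (B.v (s+1))) :
    ∀ s : ℤ, e0 ≤ s → s ≤ e0 + m → G.SameComp (B.v e0) (B.v s) := by
  have key : ∀ k : ℕ, (k : ℤ) ≤ m → G.SameComp (B.v e0) (B.v (e0 + k)) := by
    intro k
    induction k with
    | zero => intro _; simpa using sameComp_refl _
    | succ j ih =>
      intro hk
      have h1 := ih (by omega)
      have h2 := hrun (e0 + j) (by omega) (by omega)
      have := sameComp_trans h1 h2
      rwa [show e0 + (j:ℤ) + 1 = e0 + (↑(j+1):ℤ) by push_cast; ring] at this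
  intro s h1 h2
  have : s = e0 + ((s - e0).toNat : ℤ) := by omega
  rw [this]
  exact key _ (by omega)

lemma followR_of_run (B : BW G) (e0 : ℤ) (m : ℕ)
    (hrun : ∀ s : ℤ, e0 ≤ s → s < e0 + m → G.SameComp (B.v s) (B.v (s+1))) :
    (segE B.e e0 m).map G.lab ∈ G.FollowR (B.v e0) := by
  refine ⟨B.v (e0 + m), segE B.e e0 m, segE_walk B e0 m, rfl, ?_⟩
  intro f hf
  obtain ⟨t, ht1, ht2, rfl⟩ := segE_mem hf
  constructor
  · rw [B.hs t]
    exact sameComp_run B e0 m hrun t ht1 (by omega)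
  · rw [B.ht t]
    exact sameComp_run B e0 m hrun (t+1) (by omega) (by omega)

lemma chg_bound (B : BW G) (c d : ℤ) :
    {s : ℤ | c ≤ s ∧ s < d ∧ ¬ G.SameComp (B.v s) (B.v (s+1))}.Finite ∧
    {s : ℤ | c ≤ s ∧ s < d ∧ ¬ G.SameComp (B.v s) (B.v (s+1))}.ncard ≤ Nat.card G.V := by
  set Ch := {s : ℤ | c ≤ s ∧ s < d ∧ ¬ G.SameComp (B.v s) (B.v (s+1))} with hCh
  have hinj : Set.InjOn (fun s => B.v (s+1)) Ch := by
    intro s hs s' hs' heq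
    by_contra hne
    have key : ∀ a b : ℤ, a ∈ Ch → b ∈ Ch → a < b → (fun s => B.v (s+1)) a = (fun s => B.v (s+1)) b → False := by
      intro a b ha hb hab habeq
      simp only at habeq
      have h1 : G.Reach (B.v b) (B.v (b+1)) := B.reach (by omega)
      have h2 : G.Reach (B.v (b+1)) (B.v b) := by
        rw [← habeq]
        exact B.reach (by omega)
      exact hb.2.2 ⟨h1, h2⟩
    rcases lt_or_gt_of_ne hne with h | h
    · exact key s s' hs hs' h heq
    · exact key s' s hs' hs h heq.symm
  have hfin : Ch.Finite :=
    Set.Finite.of_finite_image (Set.toFinite _) hinj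
  refine ⟨hfin, ?_⟩
  calc Ch.ncard = ((fun s => B.v (s+1)) '' Ch).ncard := (Set.ncard_image_of_injOn hinj).symm
    _ ≤ (Set.univ : Set G.V).ncard := Set.ncard_le_ncard (Set.subset_univ _) (Set.toFinite _)
    _ = Nat.card G.V := Set.ncard_univ _

lemma disc_lemma (S : Set G.V)
    (hSlink : ∀ a b : G.V, G.Linked a b → a ∈ S → b ∈ S)
    (lam : ℕ)
    (hlam : ∀ a b : G.V, ¬ G.Linked a b → ∀ w ∈ G.FollowR a ∩ G.FollowR b, w.length < lam)
    (P Q : BW G) (c d : ℤ)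
    (hlab : ∀ t : ℤ, c ≤ t → t < d → G.lab (P.e t) = G.lab (Q.e t))
    (hdisc : ∀ t : ℤ, c ≤ t → t ≤ d → P.v t ∈ S ∧ Q.v t ∉ S) :
    d - c ≤ (((2 * Nat.card G.V + 1) * (lam + 1) : ℕ) : ℤ) := by
  by_contra hlong
  push_neg at hlong
  push_cast at hlong
  set K := Nat.card G.V with hK
  set ChP := {s : ℤ | c ≤ s ∧ s < d ∧ ¬ G.SameComp (P.v s) (P.v (s+1))} with hChP
  set ChQ := {s : ℤ | c ≤ s ∧ s < d ∧ ¬ G.SameComp (Q.v s) (Q.v (s+1))} with hChQ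
  obtain ⟨hfinP, hcardP⟩ := chg_bound P c d
  obtain ⟨hfinQ, hcardQ⟩ := chg_bound Q c d
  rw [← hChP] at hfinP hcardP
  rw [← hChQ] at hfinQ hcardQ
  have hfinU : (ChP ∪ ChQ).Finite := hfinP.union hfinQ
  have hcardU : (ChP ∪ ChQ).ncard ≤ 2 * K := by
    have := Set.ncard_union_le ChP ChQ
    omega
  -- find a clean block
  have hgood : ∃ t0 : ℤ, c ≤ t0 ∧ t0 + lam ≤ d ∧
      ∀ s, t0 ≤ s → s < t0 + lam → s ∉ ChP ∪ ChQ := by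
    by_contra hno
    push_neg at hno
    have hpick : ∀ k : ℕ, ∃ s : ℤ, k < 2*K+1 →
        s ∈ ChP ∪ ChQ ∧ c + k*(lam+1) ≤ s ∧ s < c + k*(lam+1) + lam := by
      intro k
      by_cases hk : k < 2*K+1
      · obtain ⟨s, hs1, hs2, hs3⟩ := hno (c + k*(lam+1))
          (by have : (0:ℤ) ≤ (k:ℤ)*(lam+1) := by positivity
              omega) (by
          have hp : (k:ℤ) * (lam+1) + lam ≤ (2*K+1) * (lam+1) := by
            have : (k:ℤ) ≤ 2*K := by exact_mod_cast Nat.lt_succ_iff.mp hk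
            nlinarith
          omega)
        exact ⟨s, fun _ => ⟨hs3, hs1, hs2⟩⟩
      · exact ⟨0, fun h => absurd h hk⟩
    choose f hf using hpick
    have hmaps : ∀ k ∈ Finset.range (2*K+1), f k ∈ hfinU.toFinset := by
      intro k hk
      simp only [Finset.mem_range] at hk
      simpa using ((hf k) hk).1
    have hcardlt : hfinU.toFinset.card < (Finset.range (2*K+1)).card := by
      rw [Finset.card_range]
      have : (ChP ∪ ChQ).ncard = hfinU.toFinset.card := Set.ncard_eq_toFinset_card _ hfinU
      omega
    obtain ⟨k1, hk1, k2, hk2, hne, heq⟩ :=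
      Finset.exists_ne_map_eq_of_card_lt_of_maps_to hcardlt hmaps
    simp only [Finset.mem_range] at hk1 hk2
    obtain ⟨_, hb1, hb2⟩ := (hf k1) hk1
    obtain ⟨_, hb1', hb2'⟩ := (hf k2) hk2
    rw [heq] at hb1 hb2
    rcases lt_or_gt_of_ne hne with h | h
    · have : (k1:ℤ) + 1 ≤ k2 := by exact_mod_cast h
      nlinarith
    · have : (k2:ℤ) + 1 ≤ k1 := by exact_mod_cast h
      nlinarith
  obtain ⟨t0, ht0c, ht0d, hclean⟩ := hgood
  have hrunP : ∀ s : ℤ, t0 ≤ s → s < t0 + lam → G.SameComp (P.v s) (P.v (s+1)) := by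
    intro s h1 h2
    by_contra hc
    exact hclean s h1 h2 (Or.inl ⟨by omega, by omega, hc⟩)
  have hrunQ : ∀ s : ℤ, t0 ≤ s → s < t0 + lam → G.SameComp (Q.v s) (Q.v (s+1)) := by
    intro s h1 h2
    by_contra hc
    exact hclean s h1 h2 (Or.inr ⟨by omega, by omega, hc⟩)
  have hwP := followR_of_run P t0 lam hrunP
  have hwQ := followR_of_run Q t0 lam hrunQ
  have hweq : (segE P.e t0 lam).map G.lab = (segE Q.e t0 lam).map G.lab := by
    refine segE_lab_eq (fun j hj => ?_)
    exact hlab (t0 + j) (by omega) (by omega)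
  have hlink : G.Linked (P.v t0) (Q.v t0) := by
    by_contra hnl
    have hmem : (segE P.e t0 lam).map G.lab ∈ G.FollowR (P.v t0) ∩ G.FollowR (Q.v t0) :=
      ⟨hwP, hweq ▸ hwQ⟩
    have := hlam _ _ hnl _ hmem
    simp at this
  have h1 := (hdisc t0 ht0c (by omega)).1
  have h2 := (hdisc t0 ht0c (by omega)).2
  exact h2 (hSlink _ _ hlink h1)

end LGraph
namespace LGraph
variable {A : Type} [Finite A] {G : LGraph A}
open Relation

lemma exists_rec_fw (B : BW G) :
    ∃ N : ℤ, 0 ≤ N ∧ ∀ K : ℤ, ∃ i : ℤ, K ≤ i ∧ B.v i = B.v N := by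
  have hex : ∃ u : G.V, {i : ℤ | 0 ≤ i ∧ B.v i = u}.Infinite := by
    by_contra hc
    push_neg at hc
    have hsub : Set.Ici (0:ℤ) ⊆ ⋃ u : G.V, {i : ℤ | 0 ≤ i ∧ B.v i = u} := by
      intro i hi
      exact Set.mem_iUnion.mpr ⟨B.v i, hi, rfl⟩
    exact (Set.Ici_infinite (0:ℤ)) (Set.Finite.subset (Set.finite_iUnion hc) hsub)
  obtain ⟨u, hu⟩ := hex
  obtain ⟨N, hN⟩ := hu.nonempty
  refine ⟨N, hN.1, fun K => ?_⟩
  by_contra hK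
  push_neg at hK
  refine hu (Set.Finite.subset (Set.finite_Icc 0 K) ?_)
  intro i hi
  rcases le_or_gt i K with h | h
  · exact ⟨hi.1, by omega⟩
  · exact absurd (hi.2.trans hN.2.symm) (hK i (by omega))

lemma exists_rec_bw (B : BW G) :
    ∃ M : ℤ, M ≤ 0 ∧ ∀ K : ℤ, ∃ i : ℤ, i ≤ K ∧ B.v i = B.v M := by
  have hex : ∃ u : G.V, {i : ℤ | i ≤ 0 ∧ B.v i = u}.Infinite := by
    by_contra hc
    push_neg at hc
    have hsub : Set.Iic (0:ℤ) ⊆ ⋃ u : G.V, {i : ℤ | i ≤ 0 ∧ B.v i = u} := by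
      intro i hi
      exact Set.mem_iUnion.mpr ⟨B.v i, hi, rfl⟩
    exact (Set.Iic_infinite (0:ℤ)) (Set.Finite.subset (Set.finite_iUnion hc) hsub)
  obtain ⟨u, hu⟩ := hex
  obtain ⟨M, hM⟩ := hu.nonempty
  refine ⟨M, hM.1, fun K => ?_⟩
  by_contra hK
  push_neg at hK
  refine hu (Set.Finite.subset (Set.finite_Icc K 0) ?_)
  intro i hi
  rcases le_or_gt K i with h | h
  · exact ⟨by omega, hi.1⟩
  · exact absurd (hi.2.trans hM.2.symm) (hK i (by omega))

lemma forward_main {x y : ℤ → A} (hx : x ∈ G.Sigma') (hy : y ∈ G.Sigma')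
    (hC : ChainRel G.Sigma' x y) :
    (∃ (v : ℤ → G.V) (e : ℤ → G.E) (v' : ℤ → G.V) (e' : ℤ → G.E),
        G.BiPresIn Set.univ x v e ∧ G.BiPresIn Set.univ y v' e' ∧
        ∃ N M : ℤ,
          (∀ i j : ℤ, N ≤ i → N ≤ j → G.GenReach (v i) (v j)) ∧
          (∀ i j : ℤ, i ≤ M → j ≤ M → G.GenReach (v' i) (v' j)) ∧
          G.GenReach (v N) (v' M)) ∨
      ∃ n : ℕ, 0 < n ∧ shift^[n] x = y := by
  obtain ⟨v, e, hpx⟩ := hx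
  obtain ⟨v', e', hpy⟩ := hy
  obtain ⟨N, hN0, hNrec⟩ := exists_rec_fw (bwOfPres hpx)
  obtain ⟨M, hM0, hMrec⟩ := exists_rec_bw (bwOfPres hpy)
  have hNmut : ∀ i j : ℤ, N ≤ i → N ≤ j → G.GenReach (v i) (v j) := by
    intro i j hi hj
    obtain ⟨k, hk1, hk2⟩ := hNrec (max i j)
    have r1 : G.GenReach ((bwOfPres hpx).v i) ((bwOfPres hpx).v N) :=
      hk2 ▸ genReach_of_reach ((bwOfPres hpx).reach (le_trans (le_max_left i j) hk1))
    exact genReach_trans r1 (genReach_of_reach ((bwOfPres hpx).reach hj))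
  have hMmut : ∀ i j : ℤ, i ≤ M → j ≤ M → G.GenReach (v' i) (v' j) := by
    intro i j hi hj
    obtain ⟨k, hk1, hk2⟩ := hMrec j
    have r1 : G.GenReach ((bwOfPres hpy).v i) ((bwOfPres hpy).v M) :=
      genReach_of_reach ((bwOfPres hpy).reach hi)
    refine genReach_trans r1 ?_
    rw [← hk2]
    exact genReach_of_reach ((bwOfPres hpy).reach hk1)
  set S : Set G.V := {b | G.GenReach (v N) b} with hS
  have hSlink : ∀ a b : G.V, G.Linked a b → a ∈ S → b ∈ S :=
    fun a b hl ha => ReflTransGen.tail ha (Or.inr hl)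
  have hSfwd : ∀ (Q : BW G) (s t : ℤ), s ≤ t → Q.v s ∈ S → Q.v t ∈ S :=
    fun Q s t hst h => genReach_trans h (genReach_of_reach (Q.reach hst))
  obtain ⟨lam, hlam0, hlam⟩ := exists_lam (G := G)
  set Lam' : ℕ := (2 * Nat.card G.V + 1) * (lam + 1) + 1 with hLam'
  set nbar : ℕ := (N - M).toNat + Lam' + 1 with hnbar
  set l0 : ℕ := N.toNat + M.natAbs + 2*Lam' + nbar + 5 with hl0
  have master : ∀ l : ℕ, l0 ≤ l →
      G.GenReach (v N) (v' M) ∨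
      ∃ n : ℕ, 0 < n ∧ n < nbar ∧ ∀ t : ℤ, t.natAbs + n ≤ l → y t = x (t + n) := by
    intro l hl
    obtain ⟨n, hn, z, hz0, hzn, hmem, hstep⟩ := hC ((2:ℝ)^(-(l:ℤ))) (by positivity)
    have hag : ∀ i, i < n → ∀ t : ℤ, t.natAbs ≤ l → z (i+1) t = z i (t+1) := by
      intro i hi t ht
      exact (agree_of_rho_lt (hstep i hi) t ht).symm
    have hcons : ∀ (k i : ℕ), i + k ≤ n → ∀ s : ℤ,
        (s - i).natAbs ≤ l → (s - (i+k) : ℤ).natAbs ≤ l →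
        z i (s - i) = z (i+k) (s - (i+k)) := by
      intro k
      induction k with
      | zero => intro i _ s _ _; norm_num
      | succ m ih =>
        intro i hik s h1 h2
        have hc1 : ((s - (i+m) : ℤ)).natAbs ≤ l := by
          have e1 : (s - i : ℤ) ≤ l ∧ -(l:ℤ) ≤ s - i := by omega
          have e2 : (s - (i+(m+1)) : ℤ) ≤ l ∧ -(l:ℤ) ≤ s - (i+(m+1)) := by
            constructor <;> omega
          push_cast at e2 ⊢
          omega
        rw [ih i (by omega) s h1 hc1]
        have key : z (i + m + 1) (s - ((i:ℤ) + m + 1)) = z (i+m) ((s - ((i:ℤ) + m + 1)) + 1) :=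
          hag (i+m) (by omega) _ (by push_cast at h2 ⊢; omega)
        calc z (i+m) (s - ((i:ℤ) + m))
            = z (i+m) ((s - ((i:ℤ) + m + 1)) + 1) := by
              congr 1
              ring
          _ = z (i + m + 1) (s - ((i:ℤ) + m + 1)) := key.symm
          _ = z (i + (m+1)) (s - ((i:ℤ) + ((m+1 : ℕ) : ℤ))) := by
              rw [show i + m + 1 = i + (m+1) by omega]
              congr 1
    have hcons' : ∀ (j i : ℕ), j ≤ i → i ≤ n → ∀ s : ℤ,
        (s - j).natAbs ≤ l → (s - i).natAbs ≤ l → z j (s - j) = z i (s - i) := by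
      intro j i hji hin s hj hi
      have h4 : ((j:ℤ) + ((i - j : ℕ) : ℤ)) = (i:ℤ) := by omega
      have := hcons (i - j) j (by omega) s hj (by rw [h4]; exact hi)
      rw [h4] at this
      rwa [show j + (i - j) = i by omega] at this
    -- the trap propagation
    have htrap : ∀ i : ℕ, i ≤ n → ∀ (Q : BW G), Q.pt = z i →
        ∀ s : ℤ, max N ((i:ℤ) - l) + Lam' ≤ s + i → Q.v s ∈ S := by
      intro i
      induction i using Nat.strong_induction_on with
      | _ i IH =>
        intro hin Q hQ s hs
        by_contra hout
        have hnotS : ∀ t : ℤ, t ≤ s → Q.v t ∉ S := by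
          intro t ht hmemS
          exact hout (hSfwd Q t s ht hmemS)
        have apply_disc : ∀ (j : ℕ) (Bj : BW G), Bj.pt = z j → ∀ Aj c : ℤ,
            (∀ t : ℤ, Aj ≤ t + j → Bj.v t ∈ S) → j ≤ i →
            Aj ≤ c → (i:ℤ) - l ≤ c →
            c + Lam' ≤ (j:ℤ) + l + 1 → c + Lam' ≤ s + i → False := by
          intro j Bj hBj Aj c htrapj hji hAjc hclo heff hcs
          obtain ⟨dm, hdm⟩ : ∃ dm : ℤ, dm = min ((j:ℤ) + l + 1) (s + i) := ⟨_, rfl⟩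
          have hm1 : dm ≤ (j:ℤ) + l + 1 := by rw [hdm]; exact min_le_left _ _
          have hm2 : dm ≤ s + i := by rw [hdm]; exact min_le_right _ _
          have hdc : c + Lam' ≤ dm := by
            rw [hdm]
            exact le_min heff hcs
          have hdisc := disc_lemma S hSlink lam hlam
            (Bj.shf (-(j:ℤ))) (Q.shf (-(i:ℤ))) c dm
            (fun t ht1 ht2 => by
              show G.lab (Bj.e (t + -(j:ℤ))) = G.lab (Q.e (t + -(i:ℤ)))
              have e1 : G.lab (Bj.e (t + -(j:ℤ))) = z j (t - j) := by
                rw [show t + -(j:ℤ) = t - j by ring]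
                exact congrFun hBj (t - j)
              have e2 : G.lab (Q.e (t + -(i:ℤ))) = z i (t - i) := by
                rw [show t + -(i:ℤ) = t - i by ring]
                exact congrFun hQ (t - i)
              rw [e1, e2]
              refine hcons' j i hji hin t ?_ ?_
              · omega
              · omega)
            (fun t ht1 ht2 => by
              constructor
              · show Bj.v (t + -(j:ℤ)) ∈ S
                exact htrapj (t + -(j:ℤ)) (by omega)
              · show Q.v (t + -(i:ℤ)) ∉ S
                exact hnotS (t + -(i:ℤ)) (by omega))
          omega
        by_cases hcaseA : (i:ℤ) ≤ 2*l + 1 - Lam'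
        · have hNt : (N.toNat : ℤ) = N := by omega
          refine apply_disc 0 (bwOfPres hpx) (by rw [bwOfPres_pt hpx, hz0]) N
            (max N ((i:ℤ) - l)) (fun t ht => ?_) (by omega) (le_max_left _ _)
            (le_max_right _ _) (by omega) (by omega)
          show G.GenReach (v N) (v t)
          exact genReach_of_reach ((bwOfPres hpx).reach (by omega))
        · push_neg at hcaseA
          have hNt : (N.toNat : ℤ) = N := by omega
          have hli : l ≤ i := by omega
          set j : ℕ := i - l with hj
          have hjZ : (j:ℤ) = (i:ℤ) - l := by omega
          have hjn : j ≤ n := by omega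
          obtain ⟨vj, ej, hpj⟩ := hmem j hjn
          have htrapj := IH j (by omega) hjn (bwOfPres hpj) (bwOfPres_pt hpj)
          refine apply_disc j (bwOfPres hpj) (bwOfPres_pt hpj)
            (max N ((j:ℤ) - l) + Lam') ((i:ℤ) - l) (fun t ht => htrapj t ht)
            (by omega) (by omega) (by omega) (by omega) (by omega)
    -- conclude
    rcases le_or_gt nbar n with hbig | hsmall
    · left
      have := htrap n le_rfl (bwOfPres hpy) (by rw [bwOfPres_pt hpy, hzn]) M (by
        have h1 : (M.natAbs : ℤ) = -M := by omega
        have h2 : ((N - M).toNat : ℤ) = N - M := by omega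
        rcases max_cases N ((n:ℤ) - l) with ⟨hm, _⟩ | ⟨hm, _⟩ <;> rw [hm] <;> omega)
      exact this
    · right
      have habase : ∀ i : ℕ, i ≤ n → ∀ t : ℤ, t.natAbs + i ≤ l → z i t = x (t + i) := by
        intro i
        induction i with
        | zero => intro _ t _; rw [hz0]; norm_num
        | succ m ih =>
          intro hin t ht
          have h1 := hag m (by omega) t (by omega)
          rw [h1, ih (by omega) (t+1) (by omega)]
          congr 1
          push_cast
          ring
      exact ⟨n, hn, hsmall, fun t ht => by
        rw [← hzn]
        exact habase n le_rfl t ht⟩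
  -- use master
  by_cases hleft : G.GenReach (v N) (v' M)
  · exact Or.inl ⟨v, e, v', e', hpx, hpy, N, M, hNmut, hMmut, hleft⟩
  · right
    have hall : ∀ l : ℕ, l0 ≤ l →
        ∃ nn : ℕ, 0 < nn ∧ nn < nbar ∧ ∀ t : ℤ, t.natAbs + nn ≤ l → y t = x (t + nn) := by
      intro l hl
      rcases master l hl with h | h
      · exact absurd h hleft
      · exact h
    have hfib : ∃ m : ℕ, {l : ℕ | l0 ≤ l ∧ 0 < m ∧ m < nbar ∧
        ∀ t : ℤ, t.natAbs + m ≤ l → y t = x (t + m)}.Infinite := by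
      by_contra hc
      push_neg at hc
      have hsub : Set.Ici l0 ⊆ ⋃ m ∈ Finset.range nbar, {l : ℕ | l0 ≤ l ∧ 0 < m ∧ m < nbar ∧
          ∀ t : ℤ, t.natAbs + m ≤ l → y t = x (t + m)} := by
        intro l hlmem
        obtain ⟨nn, h1, h2, h3⟩ := hall l hlmem
        exact Set.mem_iUnion₂.mpr ⟨nn, Finset.mem_range.mpr h2, hlmem, h1, h2, h3⟩
      have hfinU : (⋃ m ∈ Finset.range nbar, {l : ℕ | l0 ≤ l ∧ 0 < m ∧ m < nbar ∧
          ∀ t : ℤ, t.natAbs + m ≤ l → y t = x (t + m)}).Finite :=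
        Set.Finite.biUnion (Finset.range nbar).finite_toSet (fun m _ => hc m)
      exact Set.Ici_infinite l0 (Set.Finite.subset hfinU hsub)
    obtain ⟨m, hm⟩ := hfib
    obtain ⟨l1, hl1⟩ := hm.nonempty
    refine ⟨m, hl1.2.1, ?_⟩
    funext t
    have hub : ∃ l, l ∈ {l : ℕ | l0 ≤ l ∧ 0 < m ∧ m < nbar ∧
        ∀ t : ℤ, t.natAbs + m ≤ l → y t = x (t + m)} ∧ t.natAbs + m ≤ l := by
      by_contra hK
      push_neg at hK
      refine hm (Set.Finite.subset (Set.finite_Icc 0 (t.natAbs + m)) ?_)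
      intro l hlmem
      have := hK l hlmem
      simp only [Set.mem_Icc]
      omega
    obtain ⟨l, hlmem, hlt⟩ := hub
    rw [shift_iter]
    exact (hlmem.2.2.2 t hlt).symm

end LGraph
theorem stmt9 {A : Type} [Finite A] (G : LGraph A)
    (x y : ℤ → A) (hx : x ∈ G.Sigma') (hy : y ∈ G.Sigma') :
    ChainRel G.Sigma' x y ↔
      ((∃ (v : ℤ → G.V) (e : ℤ → G.E) (v' : ℤ → G.V) (e' : ℤ → G.E),
          G.BiPresIn Set.univ x v e ∧ G.BiPresIn Set.univ y v' e' ∧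
          ∃ N M : ℤ,
            (∀ i j : ℤ, N ≤ i → N ≤ j → G.GenReach (v i) (v j)) ∧
            (∀ i j : ℤ, i ≤ M → j ≤ M → G.GenReach (v' i) (v' j)) ∧
            G.GenReach (v N) (v' M)) ∨
        ∃ n : ℕ, 0 < n ∧ shift^[n] x = y) := by
  constructor
  · intro hC
    exact LGraph.forward_main hx hy hC
  · rintro (⟨v, e, v', e', hpx, hpy, N, M, hNp, hMp, hNM⟩ | ⟨n, hn, hsh⟩)
    · exact LGraph.chainRel_of_genReach v e v' e' hpx hpy N M hNp hMp hNM
    · exact LGraph.chainRel_of_shift hx n hn hsh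
end

section
/- If x is a biinfinite word in the subshift Σ(G) of a labelled graph G, then for any two presentations p, q of x in G, the projections π(p) and π(q) to the linking graph G/≈ eventually lie in the same component of G/≈ (and similarly they initially lie in a common component). -/
namespace Stmt10Aux
open LGraph
variable {A : Type} {G : LGraph A}

lemma sc_symm {u w : G.V} (h : G.SameComp u w) : G.SameComp w u := ⟨h.2, h.1⟩
lemma sc_trans {u w z : G.V} (h : G.SameComp u w) (h' : G.SameComp w z) : G.SameComp u z :=
  ⟨h.1.trans h'.1, h'.2.trans h.2⟩

lemma reach_gen {a b : G.V} (h : G.Reach a b) : G.GenReach a b :=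
  Relation.ReflTransGen.mono (fun _ _ h => Or.inl h) _ _ h

lemma linked_gen {a b : G.V} (h : G.Linked a b) : G.GenReach a b :=
  Relation.ReflTransGen.single (Or.inr h)

lemma linked_symm {a b : G.V} (h : G.Linked a b) : G.Linked b a := by
  unfold LGraph.Linked at *; rwa [Set.inter_comm]

lemma exists_freq {V : Type} [Finite V] (f : ℕ → V) :
    ∃ w : V, ∀ n : ℕ, ∃ m, n ≤ m ∧ f m = w := by
  obtain ⟨w, hw⟩ := Finite.exists_infinite_fiber f
  refine ⟨w, fun n => ?_⟩
  have hi : (f ⁻¹' {w}).Infinite := Set.infinite_coe_iff.mp hw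
  by_contra hc
  push_neg at hc
  exact hi (Set.Finite.subset (Set.finite_Iio n) (fun m hm => by
    by_contra h2
    exact hc m (le_of_not_gt h2) hm))

variable {x : ℤ → A} {v : ℤ → G.V} {e : ℤ → G.E}

lemma reach_walk (hp : G.BiPresIn Set.univ x v e) {i j : ℤ} (hij : i ≤ j) :
    G.Reach (v i) (v j) := by
  refine Int.le_induction (motive := fun j _ => G.Reach (v i) (v j)) Relation.ReflTransGen.refl (fun j hj ih => ?_) j hij
  exact ih.tail ⟨e j, (hp j).1, (hp j).2.1⟩

lemma stab_fwd (hp : G.BiPresIn Set.univ x v e) :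
    ∃ N : ℤ, ∀ i, N ≤ i → G.SameComp (v N) (v i) := by
  obtain ⟨w, hw⟩ := exists_freq (fun n : ℕ => v n)
  obtain ⟨n0, -, hn0⟩ := hw 0
  refine ⟨(n0 : ℤ), fun i hi => ?_⟩
  obtain ⟨m, hm, hmw⟩ := hw i.toNat
  have him : i ≤ (m : ℤ) := Int.toNat_le.mp hm
  have h2 : G.Reach (v i) (v (n0 : ℤ)) := by
    have := reach_walk hp him
    rw [hmw, ← hn0] at this
    exact this
  exact ⟨reach_walk hp hi, h2⟩

lemma stab_bwd (hp : G.BiPresIn Set.univ x v e) :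
    ∃ M : ℤ, ∀ i, i ≤ M → G.SameComp (v M) (v i) := by
  obtain ⟨w, hw⟩ := exists_freq (fun n : ℕ => v (-(n : ℤ)))
  obtain ⟨n0, -, hn0⟩ := hw 0
  refine ⟨-(n0 : ℤ), fun i hi => ?_⟩
  obtain ⟨m, hm, hmw⟩ := hw (-i).toNat
  have him : -(m : ℤ) ≤ i := by
    have : -i ≤ (m : ℤ) := le_trans (Int.self_le_toNat _) (by exact_mod_cast hm)
    linarith
  have h1 : G.Reach (v (-(n0:ℤ))) (v i) := by
    have := reach_walk hp him
    rw [hmw, ← hn0] at this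
    exact this
  exact ⟨h1, reach_walk hp hi⟩

lemma walk_seg (hp : G.BiPresIn Set.univ x v e) :
    ∀ (n : ℕ) (i : ℤ), G.Walk (v i) (v (i + n)) ((List.range n).map fun k : ℕ => e (i + k)) := by
  intro n
  induction n with
  | zero => intro i; simpa using Walk.nil (v i)
  | succ n ih =>
    intro i
    have hcast : ((List.range (n+1)).map fun k : ℕ => e (i + k)) =
        e i :: ((List.range n).map fun k : ℕ => e ((i+1) + k)) := by
      rw [List.range_succ_eq_map, List.map_cons, List.map_map]
      simp only [Nat.cast_zero, add_zero]
      congr 1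
      apply List.map_congr_left
      intro k _
      simp only [Function.comp]
      congr 1
      push_cast
      ring
    rw [hcast]
    have tail : G.Walk (G.t (e i)) (v (i + ((n+1 : ℕ) : ℤ)))
        ((List.range n).map fun k : ℕ => e ((i+1) + k)) := by
      rw [(hp i).2.1, show i + ((n+1 : ℕ) : ℤ) = (i+1) + (n : ℕ) by push_cast; ring]
      exact ih (i+1)
    have := Walk.cons (e i) tail
    rwa [(hp i).1] at this

lemma word_mem_followR (hp : G.BiPresIn Set.univ x v e) {i : ℤ} (n : ℕ)
    (hS : ∀ j, i ≤ j → j ≤ i + n → G.SameComp (v i) (v j)) :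
    ((List.range n).map fun k : ℕ => x (i + k)) ∈ G.FollowR (v i) := by
  refine ⟨v (i + n), (List.range n).map fun k : ℕ => e (i + k), walk_seg hp n i, ?_, ?_⟩
  · rw [List.map_map]
    apply List.map_congr_left
    intro k _
    exact (hp (i + k)).2.2.1
  · intro ed hed
    rw [List.mem_map] at hed
    obtain ⟨k, hk, rfl⟩ := hed
    rw [List.mem_range] at hk
    have hk0 : (0 : ℤ) ≤ (k : ℤ) := Int.natCast_nonneg k
    have hkn : (k : ℤ) + 1 ≤ (n : ℤ) := by exact_mod_cast hk
    constructor
    · rw [(hp (i + k)).1]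
      exact hS _ (by linarith) (by linarith)
    · rw [(hp (i + k)).2.1]
      have : i + (k : ℤ) + 1 = i + ((k : ℤ) + 1) := by ring
      rw [this]
      exact hS _ (by linarith) (by linarith)

end Stmt10Aux

theorem stmt10 {A : Type} [Finite A] (G : LGraph A) (x : ℤ → A)
    (v v' : ℤ → G.V) (e e' : ℤ → G.E)
    (hp : G.BiPresIn Set.univ x v e) (hq : G.BiPresIn Set.univ x v' e') :
    (∃ N : ℤ, ∀ i j : ℤ, N ≤ i → N ≤ j →
        G.GenReach (v i) (v' j) ∧ G.GenReach (v' j) (v i)) ∧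
    (∃ M : ℤ, ∀ i j : ℤ, i ≤ M → j ≤ M →
        G.GenReach (v i) (v' j) ∧ G.GenReach (v' j) (v i)) := by
  open Stmt10Aux in
  constructor
  · -- eventual part
    obtain ⟨N1, hN1⟩ := Stmt10Aux.stab_fwd hp
    obtain ⟨N2, hN2⟩ := Stmt10Aux.stab_fwd hq
    refine ⟨max N1 N2, fun i j hi hj => ?_⟩
    have hscv : ∀ k l : ℤ, max N1 N2 ≤ k → max N1 N2 ≤ l → G.SameComp (v k) (v l) :=
      fun k l hk hl => Stmt10Aux.sc_trans
        (Stmt10Aux.sc_symm (hN1 k (le_trans (le_max_left _ _) hk)))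
        (hN1 l (le_trans (le_max_left _ _) hl))
    have hscv' : ∀ k l : ℤ, max N1 N2 ≤ k → max N1 N2 ≤ l → G.SameComp (v' k) (v' l) :=
      fun k l hk hl => Stmt10Aux.sc_trans
        (Stmt10Aux.sc_symm (hN2 k (le_trans (le_max_right _ _) hk)))
        (hN2 l (le_trans (le_max_right _ _) hl))
    have linked_at : ∀ k : ℤ, max N1 N2 ≤ k → G.Linked (v k) (v' k) := by
      intro k hk
      have hinj : Function.Injective
          (fun n : ℕ => (List.range n).map fun m : ℕ => x (k + m)) := by
        intro a b h
        simpa using congrArg List.length h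
      refine Set.infinite_of_injective_forall_mem hinj (fun n => ⟨?_, ?_⟩)
      · exact Stmt10Aux.word_mem_followR hp n
          (fun jj hj1 hj2 => hscv k jj hk (le_trans hk hj1))
      · exact Stmt10Aux.word_mem_followR hq n
          (fun jj hj1 hj2 => hscv' k jj hk (le_trans hk hj1))
    constructor
    · exact (Stmt10Aux.linked_gen (linked_at i hi)).trans
        (Stmt10Aux.reach_gen (hscv' i j hi hj).1)
    · exact (Stmt10Aux.linked_gen (Stmt10Aux.linked_symm (linked_at j hj))).trans
        (Stmt10Aux.reach_gen (hscv j i hj hi).1)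
  · -- initial part
    obtain ⟨M1, hM1⟩ := Stmt10Aux.stab_bwd hp
    obtain ⟨M2, hM2⟩ := Stmt10Aux.stab_bwd hq
    set M := min M1 M2 with hM
    have hscv : ∀ k l : ℤ, k ≤ M → l ≤ M → G.SameComp (v k) (v l) :=
      fun k l hk hl => Stmt10Aux.sc_trans
        (Stmt10Aux.sc_symm (hM1 k (le_trans hk (min_le_left _ _))))
        (hM1 l (le_trans hl (min_le_left _ _)))
    have hscv' : ∀ k l : ℤ, k ≤ M → l ≤ M → G.SameComp (v' k) (v' l) :=
      fun k l hk hl => Stmt10Aux.sc_trans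
        (Stmt10Aux.sc_symm (hM2 k (le_trans hk (min_le_right _ _))))
        (hM2 l (le_trans hl (min_le_right _ _)))
    obtain ⟨⟨u, u'⟩, hu⟩ := Stmt10Aux.exists_freq (fun n : ℕ => (v (M - n), v' (M - n)))
    have hword : ∀ m : ℕ,
        ((List.range m).map fun k : ℕ => x ((M - m) + k)) ∈
          G.FollowR (v (M - m)) ∩ G.FollowR (v' (M - m)) := by
      intro m
      have hmM : M - (m : ℤ) ≤ M := by linarith [Int.natCast_nonneg m]
      have harg : ∀ jj : ℤ, M - (m : ℤ) ≤ jj → jj ≤ (M - (m : ℤ)) + (m : ℤ) → jj ≤ M := by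
        intro jj h1 h2; linarith
      exact ⟨Stmt10Aux.word_mem_followR hp m
          (fun jj hj1 hj2 => hscv _ jj hmM (harg jj hj1 hj2)),
        Stmt10Aux.word_mem_followR hq m
          (fun jj hj1 hj2 => hscv' _ jj hmM (harg jj hj1 hj2))⟩
    have hlink : G.Linked u u' := by
      rw [LGraph.Linked]
      by_contra hfin
      rw [Set.not_infinite] at hfin
      obtain ⟨b, hb⟩ := (hfin.image List.length).bddAbove
      obtain ⟨m, hm, hmu⟩ := hu (b + 1)
      have h1 : v (M - m) = u := congrArg Prod.fst hmu
      have h2 : v' (M - m) = u' := congrArg Prod.snd hmu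
      have hmem : ((List.range m).map fun k : ℕ => x ((M - m) + k)) ∈
          G.FollowR u ∩ G.FollowR u' := by
        rw [← h1, ← h2]; exact hword m
      have : m ≤ b := hb ⟨_, hmem, by simp⟩
      omega
    obtain ⟨m0, -, hm0⟩ := hu 0
    have h1 : v (M - m0) = u := congrArg Prod.fst hm0
    have h2 : v' (M - m0) = u' := congrArg Prod.snd hm0
    have hlink' : G.Linked (v (M - m0)) (v' (M - m0)) := by rw [h1, h2]; exact hlink
    have hmM : M - (m0 : ℤ) ≤ M := by linarith [Int.natCast_nonneg m0]
    refine ⟨M, fun i j hi hj => ⟨?_, ?_⟩⟩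
    · exact ((Stmt10Aux.reach_gen (hscv i (M - m0) hi hmM).1).trans
        (Stmt10Aux.linked_gen hlink')).trans
        (Stmt10Aux.reach_gen (hscv' (M - m0) j hmM hj).1)
    · exact ((Stmt10Aux.reach_gen (hscv' j (M - m0) hj hmM).1).trans
        (Stmt10Aux.linked_gen (Stmt10Aux.linked_symm hlink'))).trans
        (Stmt10Aux.reach_gen (hscv (M - m0) i hmM hi).1)
end

section
/- Let G be an essential labelled graph and let H be a nonempty terminal subgraph of the linking graph G/≈. Then Ω = Σ(π⁻¹(H)) is an attractor of the dynamical system (Σ(G), σ). -/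
namespace Stmt14Aux

open LGraph

variable {A : Type}

lemma two_zpow_pos (n : ℤ) : (0:ℝ) < 2 ^ n := by positivity

lemma rho_nonneg (x y : ℤ → A) : 0 ≤ rho x y := by
  unfold rho
  split
  · exact le_rfl
  · exact (two_zpow_pos _).le

lemma agree_of_rho_lt {x y : ℤ → A} {n : ℕ} (h : rho x y < 2 ^ (-(n:ℤ))) :
    ∀ i : ℤ, i.natAbs ≤ n → x i = y i := by
  intro i hi
  by_contra hne
  unfold rho at h
  split at h
  · next hxy => exact hne (congrFun hxy i)
  · next hxy =>
    have hmem : i.natAbs ∈ {m : ℕ | ∃ j : ℤ, j.natAbs = m ∧ x j ≠ y j} := ⟨i, rfl, hne⟩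
    have hle : sInf {m : ℕ | ∃ j : ℤ, j.natAbs = m ∧ x j ≠ y j} ≤ i.natAbs := Nat.sInf_le hmem
    have h2 : -((sInf {m : ℕ | ∃ j : ℤ, j.natAbs = m ∧ x j ≠ y j} : ℕ) : ℤ) < -(n:ℤ) :=
      (zpow_lt_zpow_iff_right₀ (by norm_num : (1:ℝ) < 2)).mp h
    omega

lemma rho_lt_of_agree {x y : ℤ → A} {n : ℕ} (h : ∀ i : ℤ, i.natAbs ≤ n → x i = y i) :
    rho x y < 2 ^ (-(n:ℤ)) := by
  unfold rho
  split
  · exact two_zpow_pos _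
  · next hxy =>
    have hne : {m : ℕ | ∃ j : ℤ, j.natAbs = m ∧ x j ≠ y j}.Nonempty := by
      obtain ⟨i, hi⟩ := Function.ne_iff.mp hxy
      exact ⟨i.natAbs, i, rfl, hi⟩
    obtain ⟨i, hi, hne'⟩ := Nat.sInf_mem hne
    have hlt : n < sInf {m : ℕ | ∃ j : ℤ, j.natAbs = m ∧ x j ≠ y j} := by
      by_contra hle
      exact hne' (h i (by omega))
    exact zpow_lt_zpow_right₀ (by norm_num) (by omega)

lemma distTo_nonneg (x : ℤ → A) (Y : Set (ℤ → A)) : 0 ≤ distTo x Y :=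
  Real.sInf_nonneg (by rintro r ⟨y, _, rfl⟩; exact rho_nonneg x y)

lemma distTo_le {x y : ℤ → A} {Y : Set (ℤ → A)} (hy : y ∈ Y) : distTo x Y ≤ rho x y :=
  csInf_le ⟨0, by rintro r ⟨z, _, rfl⟩; exact rho_nonneg x z⟩ ⟨y, hy, rfl⟩

lemma exists_of_distTo_lt {x : ℤ → A} {Y : Set (ℤ → A)} {δ : ℝ} (hY : Y.Nonempty)
    (h : distTo x Y < δ) : ∃ y ∈ Y, rho x y < δ := by
  obtain ⟨r, ⟨y, hy, rfl⟩, hr⟩ := (csInf_lt_iff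
    ⟨0, by rintro r ⟨z, _, rfl⟩; exact rho_nonneg x z⟩ (hY.image _)).mp h
  exact ⟨y, hy, hr⟩

lemma shift_iterate_apply (n : ℕ) (x : ℤ → A) (i : ℤ) : shift^[n] x i = x (i + n) := by
  induction n generalizing x i with
  | zero => simp
  | succ n ih =>
    rw [Function.iterate_succ_apply, ih]
    show x (i + n + 1) = x (i + (n+1:ℕ))
    congr 1
    push_cast
    ring

end Stmt14Aux
namespace Stmt14Aux

lemma sigmaIn_shift (G : LGraph A) (S : Set G.V) : shift '' G.SigmaIn S = G.SigmaIn S := by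
  ext y
  constructor
  · rintro ⟨x, ⟨v, e, h⟩, rfl⟩
    refine ⟨fun i => v (i+1), fun i => e (i+1), fun i => ?_⟩
    obtain ⟨hs, ht, hl, hm⟩ := h (i+1)
    exact ⟨hs, ht, hl, hm⟩
  · rintro ⟨v, e, h⟩
    refine ⟨fun i => y (i - 1), ⟨fun i => v (i-1), fun i => e (i-1), fun i => ?_⟩, ?_⟩
    · obtain ⟨hs, ht, hl, hm⟩ := h (i-1)
      refine ⟨hs, ?_, hl, hm⟩
      rw [ht]
      congr 1
      ring
    · funext i
      show y (i + 1 - 1) = y i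
      congr 1
      ring

lemma sigmaIn_shift_iter {G : LGraph A} {S : Set G.V} {x : ℤ → A}
    (h : x ∈ G.SigmaIn S) (n : ℕ) : shift^[n] x ∈ G.SigmaIn S := by
  induction n with
  | zero => exact h
  | succ n ih =>
    rw [Function.iterate_succ_apply']
    rw [← sigmaIn_shift G S]
    exact ⟨_, ih, rfl⟩

variable {G : LGraph A}

def segList (e : ℤ → G.E) : ℤ → ℕ → List G.E
  | _, 0 => []
  | p, n+1 => e p :: segList e (p+1) n

def labSeg (x : ℤ → A) : ℤ → ℕ → List A
  | _, 0 => []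
  | p, n+1 => x p :: labSeg x (p+1) n

def powList {B : Type} (c : List B) : ℕ → List B
  | 0 => []
  | k+1 => c ++ powList c k

lemma segList_map_lab {e : ℤ → G.E} {x : ℤ → A} (hl : ∀ i, G.lab (e i) = x i) :
    ∀ (n : ℕ) (p : ℤ), (segList e p n).map G.lab = labSeg x p n
  | 0, p => rfl
  | n+1, p => by
    simp only [segList, labSeg, List.map_cons, hl p, segList_map_lab hl n (p+1)]

lemma labSeg_congr {x y : ℤ → A} :
    ∀ (n : ℕ) (p : ℤ), (∀ i, p ≤ i → i < p + n → x i = y i) → labSeg x p n = labSeg y p n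
  | 0, p, _ => rfl
  | n+1, p, h => by
    simp only [labSeg]
    refine congrArg₂ _ (h p le_rfl (by omega)) (labSeg_congr n (p+1) fun i h1 h2 => h i (by omega) (by omega))

lemma labSeg_length (x : ℤ → A) : ∀ (n : ℕ) (p : ℤ), (labSeg x p n).length = n
  | 0, _ => rfl
  | n+1, p => by simp [labSeg, labSeg_length x n (p+1)]

lemma powList_length {B : Type} (c : List B) : ∀ k : ℕ, (powList c k).length = k * c.length
  | 0 => by simp [powList]
  | k+1 => by simp [powList, powList_length c k]; ring

lemma mem_powList {B : Type} {c : List B} {f : B} : ∀ {k : ℕ}, f ∈ powList c k → f ∈ c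
  | 0, h => absurd h List.not_mem_nil
  | k+1, h => by
    rcases List.mem_append.mp h with h | h
    · exact h
    · exact mem_powList h

lemma map_powList {B C : Type} (g : B → C) (c : List B) :
    ∀ k : ℕ, (powList c k).map g = powList (c.map g) k
  | 0 => rfl
  | k+1 => by simp [powList, map_powList g c k]

lemma mem_segList {e : ℤ → G.E} {f : G.E} :
    ∀ {n : ℕ} {p : ℤ}, f ∈ segList e p n → ∃ i : ℕ, i < n ∧ f = e (p + i)
  | 0, p, h => absurd h List.not_mem_nil
  | n+1, p, h => by
    rcases List.mem_cons.mp h with h | h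
    · exact ⟨0, by omega, by simpa using h⟩
    · obtain ⟨i, hi, hf⟩ := mem_segList h
      exact ⟨i+1, by omega, by rw [hf]; congr 1; push_cast; ring⟩

lemma walk_append {u v w : G.V} {l1 l2 : List G.E}
    (h1 : G.Walk u v l1) (h2 : G.Walk v w l2) : G.Walk u w (l1 ++ l2) := by
  induction h1 with
  | nil => exact h2
  | cons e _ ih => exact LGraph.Walk.cons e (ih h2)

lemma walk_pow {u : G.V} {c : List G.E} (h : G.Walk u u c) :
    ∀ k : ℕ, G.Walk u u (powList c k)
  | 0 => LGraph.Walk.nil u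
  | k+1 => walk_append h (walk_pow h k)

lemma walk_seg {S : Set G.V} {x : ℤ → A} {v : ℤ → G.V} {e : ℤ → G.E}
    (hp : G.BiPresIn S x v e) :
    ∀ (n : ℕ) (p : ℤ), G.Walk (v p) (v (p + n)) (segList e p n) := by
  intro n
  induction n with
  | zero =>
    intro p
    show G.Walk (v p) (v (p + ((0:ℕ):ℤ))) []
    rw [show p + ((0:ℕ):ℤ) = p by simp]
    exact LGraph.Walk.nil (v p)
  | succ n ih =>
    intro p
    have h1 := ih (p+1)
    rw [show p + 1 + (n:ℤ) = p + ((n+1:ℕ):ℤ) by push_cast; ring] at h1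
    rw [← (hp p).2.1] at h1
    have h2 := LGraph.Walk.cons (e p) h1
    rwa [(hp p).1] at h2

lemma reach_seg {S : Set G.V} {x : ℤ → A} {v : ℤ → G.V} {e : ℤ → G.E}
    (hp : G.BiPresIn S x v e) :
    ∀ (n : ℕ) (p : ℤ), G.Reach (v p) (v (p + n)) := by
  intro n
  induction n with
  | zero =>
    intro p
    rw [show p + ((0:ℕ):ℤ) = p by simp]
    exact Relation.ReflTransGen.refl
  | succ n ih =>
    intro p
    have step : G.EdgeRel (v (p+n)) (v (p + n + 1)) := ⟨e (p+n), (hp (p+n)).1, (hp (p+n)).2.1⟩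
    have := Relation.ReflTransGen.tail (ih p) step
    rwa [show p + (n:ℤ) + 1 = p + ((n+1:ℕ):ℤ) by push_cast; ring] at this

lemma forward_in_S {S : Set G.V} (hterm : G.ForwardClosed S) {x : ℤ → A}
    {v : ℤ → G.V} {e : ℤ → G.E} (hp : G.BiPresIn Set.univ x v e)
    {p : ℤ} (hpS : v p ∈ S) : ∀ j, p ≤ j → v j ∈ S := by
  have aux : ∀ n : ℕ, v (p + n) ∈ S := by
    intro n
    induction n with
    | zero => rw [show p + ((0:ℕ):ℤ) = p by simp]; exact hpS
    | succ n ih =>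
      have := hterm (e (p+n)) (by rw [(hp (p+n)).1]; exact ih)
      rw [(hp (p+n)).2.1] at this
      rwa [show p + (n:ℤ) + 1 = p + ((n+1:ℕ):ℤ) by push_cast; ring] at this
  intro j hj
  have := aux (j - p).toNat
  rwa [show p + ((j-p).toNat : ℤ) = j by omega] at this

lemma pigeon {B : Type} [Finite B] (f : ℤ → B) (a : ℤ) :
    ∃ p q : ℤ, a ≤ p ∧ p < q ∧ q ≤ a + Nat.card B ∧ f p = f q := by
  letI := Fintype.ofFinite B
  obtain ⟨k1, k2, hne, heq⟩ := Fintype.exists_ne_map_eq_of_card_lt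
      (fun k : Fin (Nat.card B + 1) => f (a + (k:ℕ)))
      (by simp [Nat.card_eq_fintype_card])
  have h1 : (k1:ℕ) < Nat.card B + 1 := k1.isLt
  have h2 : (k2:ℕ) < Nat.card B + 1 := k2.isLt
  rcases lt_or_gt_of_ne hne with h | h
  · have : (k1:ℕ) < (k2:ℕ) := h
    exact ⟨a + (k1:ℕ), a + (k2:ℕ), by omega, by omega, by omega, heq⟩
  · have : (k2:ℕ) < (k1:ℕ) := h
    exact ⟨a + (k2:ℕ), a + (k1:ℕ), by omega, by omega, by omega, heq.symm⟩

end Stmt14Aux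
namespace Stmt14Aux

variable {A : Type} {G : LGraph A}

lemma absorption {S : Set G.V} (hsat : G.SaturatedSet S)
    {x ω : ℤ → A} {v : ℤ → G.V} {e : ℤ → G.E} {v' : ℤ → G.V} {e' : ℤ → G.E}
    (hx : G.BiPresIn Set.univ x v e) (hω : G.BiPresIn S ω v' e') (a : ℤ)
    (hagree : ∀ i : ℤ, a ≤ i → i ≤ a + Nat.card G.V * Nat.card G.V → x i = ω i) :
    ∃ j : ℤ, a ≤ j ∧ j ≤ a + Nat.card G.V * Nat.card G.V ∧ v j ∈ S := by
  obtain ⟨p, q, hap, hpq, hqa, heq⟩ := pigeon (fun i => (v i, v' i)) a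
  have hqa' : q ≤ a + Nat.card G.V * Nat.card G.V := by
    rw [Nat.card_prod] at hqa
    push_cast at hqa ⊢
    omega
  set d : ℕ := (q - p).toNat with hd
  have hdpos : 0 < d := by omega
  have hqpd : q = p + (d:ℤ) := by omega
  have hvq : v (p + (d:ℤ)) = v p := by
    rw [← hqpd]; exact (congrArg Prod.fst heq).symm
  have hvq' : v' (p + (d:ℤ)) = v' p := by
    rw [← hqpd]; exact (congrArg Prod.snd heq).symm
  -- component facts
  have comp1 : ∀ i : ℕ, i ≤ d → G.SameComp (v p) (v (p + (i:ℤ))) := by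
    intro i hi
    refine ⟨reach_seg hx i p, ?_⟩
    have h2 := reach_seg hx (d - i) (p + (i:ℤ))
    rwa [show (p + (i:ℤ)) + ((d - i : ℕ):ℤ) = p + (d:ℤ) by omega, hvq] at h2
  have comp1' : ∀ i : ℕ, i ≤ d → G.SameComp (v' p) (v' (p + (i:ℤ))) := by
    intro i hi
    refine ⟨reach_seg hω i p, ?_⟩
    have h2 := reach_seg hω (d - i) (p + (i:ℤ))
    rwa [show (p + (i:ℤ)) + ((d - i : ℕ):ℤ) = p + (d:ℤ) by omega, hvq'] at h2
  -- cycle words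
  set c : List A := labSeg x p d with hc
  have hclen : c.length = d := labSeg_length x d p
  have hcyc : G.Walk (v p) (v p) (segList e p d) := by
    have := walk_seg hx d p
    rwa [hvq] at this
  have hcyc' : G.Walk (v' p) (v' p) (segList e' p d) := by
    have := walk_seg hω d p
    rwa [hvq'] at this
  have hmap : (segList e p d).map G.lab = c :=
    segList_map_lab (fun i => (hx i).2.2.1) d p
  have hmap' : (segList e' p d).map G.lab = c := by
    rw [segList_map_lab (fun i => (hω i).2.2.1) d p]
    exact labSeg_congr d p fun i h1 h2 => (hagree i (by omega) (by omega)).symm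
  -- membership of powers in both follower sets
  have hmemF : ∀ k : ℕ, powList c k ∈ G.FollowR (v p) := by
    intro k
    refine ⟨v p, powList (segList e p d) k, walk_pow hcyc k, ?_, ?_⟩
    · rw [map_powList, hmap]
    · intro f hf
      obtain ⟨i, hi, rfl⟩ := mem_segList (mem_powList hf)
      constructor
      · rw [(hx (p + (i:ℤ))).1]; exact comp1 i (by omega)
      · rw [(hx (p + (i:ℤ))).2.1]
        have := comp1 (i+1) (by omega)
        rwa [show p + ((i+1:ℕ):ℤ) = p + (i:ℤ) + 1 by omega] at this
  have hmemF' : ∀ k : ℕ, powList c k ∈ G.FollowR (v' p) := by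
    intro k
    refine ⟨v' p, powList (segList e' p d) k, walk_pow hcyc' k, ?_, ?_⟩
    · rw [map_powList, hmap']
    · intro f hf
      obtain ⟨i, hi, rfl⟩ := mem_segList (mem_powList hf)
      constructor
      · rw [(hω (p + (i:ℤ))).1]; exact comp1' i (by omega)
      · rw [(hω (p + (i:ℤ))).2.1]
        have := comp1' (i+1) (by omega)
        rwa [show p + ((i+1:ℕ):ℤ) = p + (i:ℤ) + 1 by omega] at this
  have hlink : G.Linked (v p) (v' p) := by
    refine Set.infinite_of_injective_forall_mem (f := fun k : ℕ => powList c k) ?_ ?_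
    · intro k1 k2 hk
      have := congrArg List.length hk
      rw [powList_length, powList_length, hclen] at this
      exact Nat.eq_of_mul_eq_mul_right hdpos this
    · intro k
      exact ⟨hmemF k, hmemF' k⟩
  have happrox : G.Approx (v p) (v' p) := Relation.ReflTransGen.single hlink
  have hvpS : v p ∈ S := (hsat _ _ happrox).mpr ((hω p).2.2.2)
  exact ⟨p, hap, by omega, hvpS⟩

end Stmt14Aux
namespace Stmt14Aux

variable {A : Type} {G : LGraph A}

lemma biextend {S : Set G.V} {x : ℤ → A} {v : ℤ → G.V} {e : ℤ → G.E}
    (hx : G.BiPresIn Set.univ x v e) {J : ℤ} (hS : ∀ j, J ≤ j → v j ∈ S) :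
    ∃ P : ℤ, P ≤ J + Nat.card G.V ∧ ∃ ω ∈ G.SigmaIn S, ∀ i, P ≤ i → ω i = x i := by
  obtain ⟨p, q, hJp, hpq, hqJ, heq⟩ := pigeon v J
  set d : ℤ := q - p with hd
  have hdpos : 0 < d := by omega
  set φ : ℤ → ℤ := fun i => if p ≤ i then i else p + (i - p) % d with hφ
  have hφ_ge : ∀ i, p ≤ φ i := by
    intro i
    simp only [hφ]
    split
    · assumption
    · have := Int.emod_nonneg (i - p) (by omega : d ≠ 0)
      omega
  have key : ∀ i, v (φ i + 1) = v (φ (i + 1)) := by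
    intro i
    by_cases h1 : p ≤ i
    · simp [hφ, if_pos h1, if_pos (by omega : p ≤ i + 1)]
    · by_cases h2 : p ≤ i + 1
      · have hip : i - p = -1 := by omega
        have hmod : (i - p) % d = d - 1 := by
          rw [hip, show (-1 : ℤ) = d - 1 + d * (-1) by ring, Int.add_mul_emod_self_left,
            Int.emod_eq_of_lt (by omega) (by omega)]
        simp only [hφ, if_neg h1, if_pos h2, hmod]
        rw [show p + (d - 1) + 1 = q by omega, show i + 1 = p by omega]
        exact heq.symm
      · have hm := Int.emod_nonneg (i - p) (by omega : d ≠ 0)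
        have hm2 := Int.emod_lt_of_pos (i - p) hdpos
        have step : (i + 1 - p) % d = ((i - p) % d + 1) % d := by
          conv_lhs => rw [show i + 1 - p = (i - p) % d + 1 + d * ((i-p)/d) by
            have := Int.mul_ediv_add_emod (i - p) d; linarith]
          rw [Int.add_mul_emod_self_left]
        simp only [hφ, if_neg h1, if_neg h2, step]
        rcases eq_or_lt_of_le (by omega : (i - p) % d + 1 ≤ d) with h4 | h4
        · rw [h4, Int.emod_self, show p + (i - p) % d + 1 = q by omega, show p + 0 = p by ring]
          exact heq.symm
        · rw [Int.emod_eq_of_lt (by omega) h4]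
          congr 1
          ring
  refine ⟨p, by omega, fun i => x (φ i), ⟨fun i => v (φ i), fun i => e (φ i), fun i => ?_⟩,
    fun i hi => by simp [hφ, if_pos hi]⟩
  obtain ⟨hs, ht, hl, -⟩ := hx (φ i)
  exact ⟨hs, by rw [ht]; exact key i, hl, hS _ (le_trans hJp (hφ_ge i))⟩

lemma exists_pres_through (hG : G.Essential) (v0 : G.V) :
    ∃ x v e, G.BiPresIn Set.univ x v e ∧ v 0 = v0 := by
  choose F hF using fun w : G.V => (hG w).2
  choose Bk hBk using fun w : G.V => (hG w).1
  let u : ℕ → G.V := fun n => Nat.rec v0 (fun _ w => G.t (F w)) n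
  let b : ℕ → G.V := fun n => Nat.rec v0 (fun _ w => G.s (Bk w)) n
  let v : ℤ → G.V := fun i => if 0 ≤ i then u i.toNat else b (-i).toNat
  let e : ℤ → G.E := fun i => if 0 ≤ i then F (u i.toNat) else Bk (b (-(i+1)).toNat)
  have hv0 : v 0 = v0 := by simp [v, u]
  refine ⟨fun i => G.lab (e i), v, e, fun i => ?_, hv0⟩
  refine ⟨?_, ?_, rfl, trivial⟩
  · by_cases h : 0 ≤ i
    · simp only [v, e, if_pos h, hF]
    · simp only [v, e, if_neg h]
      rw [show (-i).toNat = (-(i+1)).toNat + 1 by omega]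
  · by_cases h : 0 ≤ i
    · simp only [v, e, if_pos h, if_pos (by omega : (0:ℤ) ≤ i + 1)]
      rw [show (i+1).toNat = i.toNat + 1 by omega]
    · simp only [v, e, if_neg h]
      rw [hBk]
      by_cases h2 : 0 ≤ i + 1
      · have hi1 : i + 1 = 0 := by omega
        rw [hi1]
        simp [u, b]
      · simp only [if_neg h2]

end Stmt14Aux
namespace Stmt14Aux

variable {A : Type} {G : LGraph A}

lemma ultra_const {B : Type} [Finite B] [Nonempty B] (U : Ultrafilter ℕ) (f : ℕ → B) :
    ∃ b : B, {n | f n = b} ∈ U := by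
  by_contra h
  push_neg at h
  have h2 : ∀ b : B, {n | f n = b}ᶜ ∈ U := fun b => Ultrafilter.compl_mem_iff_notMem.mpr (h b)
  have h3 : (⋂ b : B, {n | f n = b}ᶜ) ∈ (U : Filter ℕ) := Filter.iInter_mem.mpr h2
  have h4 : (⋂ b : B, {n : ℕ | f n = b}ᶜ) = ∅ := by
    ext n
    simp only [Set.mem_iInter, Set.mem_compl_iff, Set.mem_setOf_eq, Set.mem_empty_iff_false,
      iff_false, not_forall, not_not]
    exact ⟨f n, rfl⟩
  rw [h4] at h3
  exact Filter.empty_notMem (U : Filter ℕ) h3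

lemma sigmaIn_nonempty (hG : G.Essential) {S : Set G.V} (hterm : G.ForwardClosed S)
    (hne : S.Nonempty) : (G.SigmaIn S).Nonempty := by
  obtain ⟨v0, hv0⟩ := hne
  obtain ⟨x, v, e, hp, hv⟩ := exists_pres_through hG v0
  have hS : ∀ j, (0:ℤ) ≤ j → v j ∈ S := forward_in_S hterm hp (hv ▸ hv0)
  obtain ⟨P, _, ω, hω, _⟩ := biextend hp hS
  exact ⟨ω, hω⟩

lemma rhoClosed_sigmaIn (G : LGraph A) (S : Set G.V) : RhoClosed (G.SigmaIn S) := by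
  intro x hx
  have hex : ∀ n : ℕ, ∃ y, y ∈ G.SigmaIn S ∧ rho x y < 2 ^ (-(n:ℤ)) := by
    intro n
    obtain ⟨y, hy, hr⟩ := hx (2 ^ (-(n:ℤ))) (two_zpow_pos _)
    exact ⟨y, hy, hr⟩
  choose y hy hr using hex
  choose v e hpres using hy
  haveI hV : Nonempty G.V := ⟨v 0 0⟩
  haveI hE : Nonempty G.E := ⟨e 0 0⟩
  obtain ⟨U, hU⟩ := Ultrafilter.exists_le (Filter.cofinite : Filter ℕ)
  choose V0 hV0 using fun i : ℤ => ultra_const U (fun n => v n i)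
  choose E0 hE0 using fun i : ℤ => ultra_const U (fun n => e n i)
  refine ⟨V0, E0, fun i => ?_⟩
  have hcof : {n : ℕ | i.natAbs ≤ n} ∈ U := hU (by
    rw [Nat.cofinite_eq_atTop]
    exact Filter.mem_atTop _)
  have hbig : ({n | v n i = V0 i} ∩ ({n | v n (i+1) = V0 (i+1)} ∩
      ({n | e n i = E0 i} ∩ {n : ℕ | i.natAbs ≤ n}))) ∈ U :=
    Filter.inter_mem (hV0 i) (Filter.inter_mem (hV0 (i+1)) (Filter.inter_mem (hE0 i) hcof))
  obtain ⟨n, hn1, hn2, hn3, hn4⟩ := U.nonempty_of_mem hbig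
  obtain ⟨hs, ht, hl, hm⟩ := hpres n i
  refine ⟨?_, ?_, ?_, ?_⟩
  · rw [← hn3, hs, hn1]
  · rw [← hn3, ht, hn2]
  · rw [← hn3, hl]
    exact (agree_of_rho_lt (hr n) i hn4).symm
  · rw [← hn1]
    exact hm

end Stmt14Aux
namespace Stmt14Aux

variable {A : Type} {G : LGraph A}

lemma key_est {S : Set G.V} (hsat : G.SaturatedSet S) (hterm : G.ForwardClosed S)
    (hΩ : (G.SigmaIn S).Nonempty) (m : ℕ) :
    ∃ δ : ℝ, 0 < δ ∧ ∀ x ∈ G.Sigma', distTo x (G.SigmaIn S) < δ →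
      ∃ P : ℤ, P ≤ -((m:ℤ)+1) ∧ ∃ ω ∈ G.SigmaIn S, ∀ i, P ≤ i → ω i = x i := by
  obtain ⟨L, hL⟩ : ∃ L : ℕ, L = Nat.card G.V * Nat.card G.V + Nat.card G.V + m + 1 := ⟨_, rfl⟩
  refine ⟨2 ^ (-(L:ℤ)), two_zpow_pos _, ?_⟩
  intro x hx hdist
  obtain ⟨ω0, hω0, hrho⟩ := exists_of_distTo_lt hΩ hdist
  have hagree := agree_of_rho_lt hrho
  obtain ⟨v, e, hp⟩ := hx
  obtain ⟨v', e', hp'⟩ := hω0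
  obtain ⟨j0, hj1, hj2, hj3⟩ := absorption hsat hp hp' (-(L:ℤ))
      (fun i h1 h2 => hagree i (by omega))
  have hS : ∀ j, -(L:ℤ) + ((Nat.card G.V * Nat.card G.V : ℕ) : ℤ) ≤ j → v j ∈ S := by
    intro j hj
    exact forward_in_S hterm hp hj3 j (by omega)
  obtain ⟨P, hP, ω, hω, hag⟩ := biextend hp hS
  exact ⟨P, by omega, ω, hω, hag⟩

end Stmt14Aux

theorem stmt14 {A : Type} [Finite A] (G : LGraph A) (hG : G.Essential)
    (S : Set G.V) (hne : S.Nonempty)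
    (hsat : G.SaturatedSet S) (hterm : G.ForwardClosed S) :
    IsAttractor G.Sigma' (G.SigmaIn S) := by
  open Stmt14Aux in
  have hΩ : (G.SigmaIn S).Nonempty := sigmaIn_nonempty hG hterm hne
  refine ⟨hΩ, ?_, rhoClosed_sigmaIn G S, sigmaIn_shift G S, ?_, ?_⟩
  · rintro x ⟨v, e, h⟩
    exact ⟨v, e, fun i => ⟨(h i).1, (h i).2.1, (h i).2.2.1, trivial⟩⟩
  · -- attraction estimate
    intro ε hε
    obtain ⟨m, hm⟩ : ∃ m : ℕ, (2:ℝ) ^ (-(m:ℤ)) < ε := by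
      obtain ⟨m, hm⟩ := exists_pow_lt_of_lt_one hε (by norm_num : (1:ℝ)/2 < 1)
      refine ⟨m, ?_⟩
      rw [zpow_neg, zpow_natCast]
      rwa [one_div, inv_pow] at hm
    obtain ⟨δ, hδ, hkey⟩ := key_est hsat hterm hΩ m
    refine ⟨δ, hδ, ?_⟩
    intro x hx hdist n hn
    obtain ⟨P, hP, ω, hω, hag⟩ := hkey x hx hdist
    have hagr : ∀ i : ℤ, i.natAbs ≤ m → shift^[n] x i = shift^[n] ω i := by
      intro i hi
      rw [shift_iterate_apply, shift_iterate_apply]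
      exact (hag (i + n) (by omega)).symm
    calc distTo (shift^[n] x) (G.SigmaIn S) ≤ rho (shift^[n] x) (shift^[n] ω) :=
          distTo_le (sigmaIn_shift_iter hω n)
      _ < 2 ^ (-(m:ℤ)) := rho_lt_of_agree hagr
      _ < ε := hm
  · -- convergence
    obtain ⟨δ, hδ, hkey⟩ := key_est hsat hterm hΩ 0
    refine ⟨δ, hδ, ?_⟩
    intro x hx hdist
    obtain ⟨P, hP, ω, hω, hag⟩ := hkey x hx hdist
    have hbound : ∀ n : ℕ, 1 ≤ n → distTo (shift^[n] x) (G.SigmaIn S) ≤ (1/2:ℝ) ^ n := by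
      intro n hn
      have hagr : ∀ i : ℤ, i.natAbs ≤ n → shift^[n] x i = shift^[n] ω i := by
        intro i hi
        rw [shift_iterate_apply, shift_iterate_apply]
        exact (hag (i + n) (by omega)).symm
      have h1 : distTo (shift^[n] x) (G.SigmaIn S) ≤ rho (shift^[n] x) (shift^[n] ω) :=
        distTo_le (sigmaIn_shift_iter hω n)
      have h2 := rho_lt_of_agree hagr
      have h3 : (2:ℝ) ^ (-(n:ℤ)) = (1/2:ℝ) ^ n := by
        rw [zpow_neg, zpow_natCast, one_div, inv_pow]
      linarith
    apply squeeze_zero' (Filter.Eventually.of_forall fun n => distTo_nonneg _ _)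
      (Filter.eventually_atTop.mpr ⟨1, hbound⟩)
    exact tendsto_pow_atTop_nhds_zero_of_lt_one (by norm_num) (by norm_num)
end
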